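/- arXiv:chao-dyn/9812013 — 7 statements merged into one kernel-verified Lean document; each statement's English description precedes it below -/
import Mathlib

section
/- Let σ(N) = C(0)/N + (2/N²) Σ_{j=1}^{N} (N−j) C(j), where C(j) are real numbers with |C(j)| ≤ K e^{−λ j} for some constants K > 0, λ > 0. Then σ(N) = O(1/N²) as N → ∞ if and only if C(0) + 2 Σ_{j=1}^{∞} C(j) = 0. -/
open Finset Filter Asymptotics

set_option maxHeartbeats 1000000 in
/-- with exponentially decaying covariances `C`, the expected squared
error `σ(N) = C(0)/N + (2/N²) Σ_{j=1}^{N} (N−j) C(j)` is `O(1/N²)` iff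
`C(0) + 2 Σ_{j=1}^∞ C(j) = 0`. -/
theorem superefficiency_condition
    (C : ℕ → ℝ) (K lam : ℝ) (hK : 0 < K) (hlam : 0 < lam)
    (hdecay : ∀ j : ℕ, 1 ≤ j → |C j| ≤ K * Real.exp (-lam * j))
    (σ : ℕ → ℝ)
    (hσ : ∀ N : ℕ, σ N = C 0 / N
        + (2 / (N : ℝ) ^ 2) * ∑ j ∈ Icc 1 N, ((N : ℝ) - (j : ℝ)) * C j) :
    (fun N : ℕ => σ N) =O[atTop] (fun N : ℕ => 1 / (N : ℝ) ^ 2)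
      ↔ C 0 + 2 * ∑' j : ℕ, C (j + 1) = 0 := by
  set r : ℝ := Real.exp (-lam) with hrdef
  have hr0 : 0 < r := Real.exp_pos _
  have hr1 : r < 1 := Real.exp_lt_one_iff.mpr (by linarith)
  -- bound in terms of powers of r
  have hbound : ∀ j : ℕ, 1 ≤ j → |C j| ≤ K * r ^ j := by
    intro j hj
    have h := hdecay j hj
    rwa [show -lam * (j : ℝ) = (j : ℝ) * (-lam) by ring, Real.exp_nat_mul] at h
  -- summability facts
  have hgeo : Summable (fun j : ℕ => K * r ^ j) :=
    (summable_geometric_of_lt_one hr0.le hr1).mul_left K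
  have hsumC : Summable (fun j : ℕ => C (j + 1)) := by
    apply Summable.of_norm_bounded ((summable_geometric_of_lt_one hr0.le hr1).mul_left (K * r))
    intro j
    have := hbound (j + 1) (Nat.le_add_left 1 j)
    calc ‖C (j + 1)‖ = |C (j + 1)| := rfl
      _ ≤ K * r ^ (j + 1) := this
      _ = K * r * r ^ j := by ring
  have hQsum : Summable (fun j : ℕ => (j : ℝ) * (K * r ^ j)) := by
    have := (summable_pow_mul_geometric_of_norm_lt_one 1
      (r := r) (by rwa [Real.norm_eq_abs, abs_of_pos hr0])).mul_left K
    apply this.congr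
    intro j; simp; ring
  set S : ℝ := ∑' j : ℕ, C (j + 1) with hS
  set A : ℝ := C 0 + 2 * S with hA
  set M : ℝ := ∑' j : ℕ, (j : ℝ) * (K * r ^ j) with hM
  have hM0 : 0 ≤ M := tsum_nonneg fun j => by positivity
  -- partial sums over Icc 1 N as range sums
  have hreindex : ∀ N : ℕ, ∀ f : ℕ → ℝ,
      ∑ j ∈ Icc 1 N, f j = ∑ j ∈ range N, f (j + 1) := by
    intro N f
    rw [← Finset.Ico_add_one_right_eq_Icc, Finset.sum_Ico_eq_sum_range]
    simp [add_comm]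
  -- tail bound
  have htail : ∀ N : ℕ, |S - ∑ j ∈ range N, C (j + 1)| ≤ K * r / (1 - r) * r ^ N := by
    intro N
    have hkey : S - ∑ j ∈ range N, C (j + 1) = ∑' k : ℕ, C (k + N + 1) := by
      have h := Summable.sum_add_tsum_nat_add (f := fun j => C (j + 1)) N hsumC
      rw [hS]; linarith [h]
    rw [hkey]
    have hsummaj : Summable (fun k : ℕ => K * r ^ (k + N + 1)) := by
      apply Summable.congr ((summable_geometric_of_lt_one hr0.le hr1).mul_left (K * r ^ (N + 1)))
      intro k; rw [show k + N + 1 = (N + 1) + k by omega, pow_add]; ring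
    have h1 : |∑' k : ℕ, C (k + N + 1)| ≤ ∑' k : ℕ, K * r ^ (k + N + 1) := by
      have hsub : Summable (fun k : ℕ => C (k + N + 1)) := by
        apply Summable.of_norm_bounded hsummaj
        intro k; exact hbound (k + N + 1) (Nat.le_add_left 1 _)
      calc |∑' k : ℕ, C (k + N + 1)| ≤ ∑' k : ℕ, |C (k + N + 1)| := by
            simpa only [Real.norm_eq_abs] using
              norm_tsum_le_tsum_norm (f := fun k => C (k + N + 1)) hsub.norm
        _ ≤ ∑' k : ℕ, K * r ^ (k + N + 1) := by
            apply Summable.tsum_le_tsum _ (hsub.abs) hsummaj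
            intro k; exact hbound (k + N + 1) (Nat.le_add_left 1 _)
    have h2 : ∑' k : ℕ, K * r ^ (k + N + 1) = K * r / (1 - r) * r ^ N := by
      have : ∀ k : ℕ, K * r ^ (k + N + 1) = (K * r * r ^ N) * r ^ k := by
        intro k; rw [pow_add, pow_add]; ring
      rw [tsum_congr this, tsum_mul_left, tsum_geometric_of_lt_one hr0.le hr1]
      field_simp
    rw [h2] at h1; exact h1
  -- bound on the weighted sum
  have hQ : ∀ N : ℕ, |∑ j ∈ Icc 1 N, (j : ℝ) * C j| ≤ M := by
    intro N
    calc |∑ j ∈ Icc 1 N, (j : ℝ) * C j| ≤ ∑ j ∈ Icc 1 N, |(j : ℝ) * C j| :=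
          Finset.abs_sum_le_sum_abs _ _
      _ ≤ ∑ j ∈ Icc 1 N, (j : ℝ) * (K * r ^ j) := by
          apply Finset.sum_le_sum
          intro j hj
          rw [abs_mul, Nat.abs_cast]
          exact mul_le_mul_of_nonneg_left (hbound j (mem_Icc.mp hj).1) (Nat.cast_nonneg j)
      _ ≤ M := by
          apply Summable.sum_le_tsum _ _ hQsum
          intro j _; positivity
  -- Bernoulli-type bound : N * r ^ N ≤ r / (1 - r)
  have h1r : (0:ℝ) < 1 - r := by linarith
  have hNr : ∀ N : ℕ, (N : ℝ) * r ^ N ≤ r / (1 - r) := by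
    intro N
    have hrpow : (0:ℝ) < r ^ N := pow_pos hr0 N
    have ha : (0:ℝ) ≤ r⁻¹ - 1 := by nlinarith [mul_inv_cancel₀ hr0.ne']
    have hber : 1 + (N:ℝ) * (r⁻¹ - 1) ≤ (r ^ N)⁻¹ := by
      have h := one_add_mul_le_pow (a := r⁻¹ - 1) (by linarith) N
      rw [show (1:ℝ) + (r⁻¹ - 1) = r⁻¹ by ring, inv_pow] at h
      exact h
    have key : (N:ℝ) * (r⁻¹ - 1) ≤ (r ^ N)⁻¹ := by linarith
    rw [le_div_iff₀ h1r]
    have key2 : ((N:ℝ) * (r⁻¹ - 1)) * (r * r ^ N) ≤ (r ^ N)⁻¹ * (r * r ^ N) :=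
      mul_le_mul_of_nonneg_right key (by positivity)
    have e1 : ((N:ℝ) * (r⁻¹ - 1)) * (r * r ^ N) = (N:ℝ) * r ^ N * (1 - r) := by
      field_simp
    have e2 : (r ^ N)⁻¹ * (r * r ^ N) = r := by field_simp
    linarith [key2]
  -- the main error estimate
  have hE : (fun N : ℕ => σ N - A / N) =O[atTop] (fun N : ℕ => 1 / (N : ℝ) ^ 2) := by
    rw [isBigO_iff]
    refine ⟨2 * (K * r / (1 - r)) * (r / (1 - r)) + 2 * M, ?_⟩
    filter_upwards [eventually_ge_atTop 1] with N hN
    have hN0 : (0:ℝ) < (N : ℝ) := by exact_mod_cast hN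
    have hN2 : (0:ℝ) < (N : ℝ) ^ 2 := by positivity
    have hT0 : (0:ℝ) ≤ K * r / (1 - r) := by positivity
    -- rewrite σ N - A / N
    have hsplit : σ N - A / N =
        (2 / N) * ((∑ j ∈ range N, C (j + 1)) - S)
          - (2 / (N : ℝ) ^ 2) * ∑ j ∈ Icc 1 N, (j : ℝ) * C j := by
      rw [hσ N, hA]
      have h1 : ∑ j ∈ Icc 1 N, ((N : ℝ) - (j : ℝ)) * C j
          = (N : ℝ) * ∑ j ∈ Icc 1 N, C j - ∑ j ∈ Icc 1 N, (j : ℝ) * C j := by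
        rw [Finset.mul_sum, ← Finset.sum_sub_distrib]
        apply Finset.sum_congr rfl; intro j _; ring
      rw [h1, hreindex N C]
      field_simp
      ring
    have hterm1 : |(2 / (N:ℝ)) * ((∑ j ∈ range N, C (j + 1)) - S)|
        ≤ 2 * (K * r / (1 - r)) * (r / (1 - r)) / (N : ℝ) ^ 2 := by
      rw [abs_mul, abs_of_pos (by positivity : (0:ℝ) < 2 / (N:ℝ)), abs_sub_comm]
      calc 2 / (N:ℝ) * |S - ∑ j ∈ range N, C (j + 1)|
          ≤ 2 / (N:ℝ) * (K * r / (1 - r) * r ^ N) :=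
            mul_le_mul_of_nonneg_left (htail N) (by positivity)
        _ = 2 * (K * r / (1 - r)) * ((N:ℝ) * r ^ N) / (N : ℝ) ^ 2 := by
            field_simp
        _ ≤ 2 * (K * r / (1 - r)) * (r / (1 - r)) / (N : ℝ) ^ 2 := by
            gcongr
            exact hNr N
    have hterm2 : |(2 / (N : ℝ) ^ 2) * ∑ j ∈ Icc 1 N, (j : ℝ) * C j|
        ≤ 2 * M / (N : ℝ) ^ 2 := by
      rw [abs_mul, abs_of_pos (by positivity : (0:ℝ) < 2 / (N:ℝ) ^ 2)]
      calc 2 / (N:ℝ) ^ 2 * |∑ j ∈ Icc 1 N, (j : ℝ) * C j|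
          ≤ 2 / (N:ℝ) ^ 2 * M := mul_le_mul_of_nonneg_left (hQ N) (by positivity)
        _ = 2 * M / (N : ℝ) ^ 2 := by ring
    have habs : ‖σ N - A / N‖ ≤ (2 * (K * r / (1 - r)) * (r / (1 - r)) + 2 * M) / (N:ℝ)^2 := by
      rw [hsplit, Real.norm_eq_abs]
      calc |(2 / (N:ℝ)) * ((∑ j ∈ range N, C (j + 1)) - S)
              - (2 / (N : ℝ) ^ 2) * ∑ j ∈ Icc 1 N, (j : ℝ) * C j|
          ≤ |(2 / (N:ℝ)) * ((∑ j ∈ range N, C (j + 1)) - S)|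
              + |(2 / (N : ℝ) ^ 2) * ∑ j ∈ Icc 1 N, (j : ℝ) * C j| := abs_sub _ _
        _ ≤ 2 * (K * r / (1 - r)) * (r / (1 - r)) / (N : ℝ) ^ 2 + 2 * M / (N:ℝ)^2 := by
            exact add_le_add hterm1 hterm2
        _ = (2 * (K * r / (1 - r)) * (r / (1 - r)) + 2 * M) / (N:ℝ)^2 := by ring
    calc ‖σ N - A / N‖ ≤ (2 * (K * r / (1 - r)) * (r / (1 - r)) + 2 * M) / (N:ℝ)^2 := habs
      _ = (2 * (K * r / (1 - r)) * (r / (1 - r)) + 2 * M) * ‖1 / (N:ℝ)^2‖ := by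
          rw [Real.norm_eq_abs, abs_of_pos (by positivity : (0:ℝ) < 1 / (N:ℝ)^2)]
          ring
  constructor
  · intro hO
    have hdiv : (fun N : ℕ => A / (N : ℝ)) =O[atTop] (fun N : ℕ => 1 / (N : ℝ) ^ 2) := by
      have := hO.sub hE
      apply this.congr_left
      intro N; ring
    rw [isBigO_iff] at hdiv
    obtain ⟨c, hc⟩ := hdiv
    have hev : ∀ᶠ N : ℕ in atTop, |A| ≤ c * (1 / (N:ℝ)) := by
      filter_upwards [hc, eventually_ge_atTop 1] with N h1 h2
      have hN0 : (0:ℝ) < (N : ℝ) := by exact_mod_cast h2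
      rw [Real.norm_eq_abs, Real.norm_eq_abs, abs_div, abs_of_pos hN0,
        abs_of_pos (by positivity : (0:ℝ) < 1 / (N:ℝ)^2)] at h1
      have h3 : |A| ≤ c * (1 / (N:ℝ)^2) * (N:ℝ) := by
        rw [div_le_iff₀ hN0] at h1
        linarith
      calc |A| ≤ c * (1 / (N:ℝ)^2) * (N:ℝ) := h3
        _ = c * (1 / (N:ℝ)) := by field_simp
    have hlim : Tendsto (fun N : ℕ => c * (1 / (N:ℝ))) atTop (nhds 0) := by
      have := tendsto_one_div_atTop_nhds_zero_nat.const_mul c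
      simpa using this
    have hA0 : |A| ≤ 0 := ge_of_tendsto hlim hev
    have : A = 0 := abs_nonpos_iff.mp hA0
    rw [hA] at this; linarith [this]
  · intro h0
    have hA0 : A = 0 := by rw [hA]; linarith [h0]
    have : (fun N : ℕ => σ N) = (fun N : ℕ => σ N - A / N) := by
      funext N; rw [hA0]; simp
    rw [this]; exact hE
end

section
/- Let B(x) = Σ_{k=1}^{L} b_k T_k(x) with p > L and p ≥ 2. Then for every j ≥ 1, ⟨B(x)·B(T_{p^j}(x))⟩ = 0 with respect to the measure dx/(π√(1−x²)) on [−1,1], i.e. the p-th Chebyshev map induces no dynamical correlation on B. -/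
open Polynomial Polynomial.Chebyshev MeasureTheory Finset

private lemma int_cos_c (c : ℝ) (hc : c ≠ 0) :
    ∫ θ in (0:ℝ)..Real.pi, Real.cos (c * θ) = Real.sin (c * Real.pi) / c := by
  have h := intervalIntegral.integral_comp_mul_left (a := (0:ℝ)) (b := Real.pi)
    (fun x => Real.cos x) hc
  simp only [mul_zero, integral_cos, Real.sin_zero, sub_zero,
    smul_eq_mul] at h
  rw [h]; field_simp

private lemma cos_orth (a c : ℕ) (hac : a ≠ c) :
    ∫ θ in (0:ℝ)..Real.pi, Real.cos (a * θ) * Real.cos (c * θ) = 0 := by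
  have key : ∀ θ : ℝ, Real.cos (a * θ) * Real.cos (c * θ)
      = (Real.cos (((a:ℝ) + c) * θ) + Real.cos (((a:ℝ) - c) * θ)) / 2 := by
    intro θ
    rw [add_mul, sub_mul, Real.cos_add, Real.cos_sub]; ring
  rw [intervalIntegral.integral_congr (g := fun θ =>
      (Real.cos (((a:ℝ) + c) * θ) + Real.cos (((a:ℝ) - c) * θ)) / 2)
      (fun θ _ => key θ)]
  have h1 : ((a:ℝ) + c) ≠ 0 := by
    have : a + c ≠ 0 := by omega
    push_cast [← Nat.cast_add]
    exact_mod_cast this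
  have h2 : ((a:ℝ) - c) ≠ 0 := by
    intro h
    apply hac
    have : (a:ℝ) = c := by linarith
    exact_mod_cast this
  have i1 : IntervalIntegrable (fun θ => Real.cos (((a:ℝ) + c) * θ)) volume 0 Real.pi :=
    (Real.continuous_cos.comp (continuous_const.mul continuous_id)).intervalIntegrable _ _
  have i2 : IntervalIntegrable (fun θ => Real.cos (((a:ℝ) - c) * θ)) volume 0 Real.pi :=
    (Real.continuous_cos.comp (continuous_const.mul continuous_id)).intervalIntegrable _ _
  rw [intervalIntegral.integral_div, intervalIntegral.integral_add i1 i2,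
    int_cos_c _ h1, int_cos_c _ h2]
  have s1 : Real.sin (((a:ℝ) + c) * Real.pi) = 0 := by
    rw [show ((a:ℝ) + c) = ((a + c : ℕ) : ℝ) by push_cast; ring]
    exact Real.sin_nat_mul_pi _
  have s2 : Real.sin (((a:ℝ) - c) * Real.pi) = 0 := by
    rw [show ((a:ℝ) - c) = (((a:ℤ) - c : ℤ) : ℝ) by push_cast; ring]
    exact Real.sin_int_mul_pi _
  rw [s1, s2]; simp

private lemma cos_image_Ioo : Real.cos '' Set.Ioo 0 Real.pi = Set.Ioo (-1 : ℝ) 1 := by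
  ext y
  constructor
  · rintro ⟨θ, ⟨h0, hπ⟩, rfl⟩
    constructor
    · have := Real.strictAntiOn_cos (Set.mem_Icc.2 ⟨h0.le, hπ.le⟩)
        (Set.mem_Icc.2 ⟨Real.pi_pos.le, le_refl _⟩) hπ
      simpa [Real.cos_pi] using this
    · have := Real.strictAntiOn_cos (Set.mem_Icc.2 ⟨le_refl _, Real.pi_pos.le⟩)
        (Set.mem_Icc.2 ⟨h0.le, hπ.le⟩) h0
      simpa [Real.cos_zero] using this
  · rintro ⟨hy1, hy2⟩
    refine ⟨Real.arccos y, ⟨Real.arccos_pos.2 hy2, ?_⟩, Real.cos_arccos hy1.le hy2.le⟩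
    exact lt_of_le_of_ne (Real.arccos_le_pi y)
      (fun h => absurd (Real.arccos_eq_pi.1 h) (by linarith))

/-- if `B = Σ_{k=1}^L b_k T_k` with `L < p`, the `p`-th Chebyshev map
induces no dynamical correlation on `B`. -/
theorem chebyshev_no_correlation
    (L : ℕ) (b : ℕ → ℝ) (p : ℕ) (hp : 2 ≤ p) (hL : L < p)
    (B : ℝ → ℝ) (hB : ∀ x, B x = ∑ k ∈ Icc 1 L, b k * (T ℝ k).eval x)
    (j : ℕ) (hj : 1 ≤ j) :
    ∫ x in Set.Icc (-1 : ℝ) 1,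
        B x * B ((T ℝ (p ^ j : ℕ)).eval x) * (1 / (Real.pi * Real.sqrt (1 - x ^ 2)))
      = 0 := by
  set N : ℕ := p ^ j with hN
  set G : ℝ → ℝ := fun x =>
    B x * B ((T ℝ (N : ℕ)).eval x) * (1 / (Real.pi * Real.sqrt (1 - x ^ 2))) with hG
  have hderiv : ∀ θ ∈ Set.Ioo (0:ℝ) Real.pi,
      HasDerivWithinAt Real.cos (-Real.sin θ) (Set.Ioo 0 Real.pi) θ :=
    fun θ _ => (Real.hasDerivAt_cos θ).hasDerivWithinAt
  have hinj : Set.InjOn Real.cos (Set.Ioo 0 Real.pi) :=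
    Real.injOn_cos.mono Set.Ioo_subset_Icc_self
  have hchg := integral_image_eq_integral_abs_deriv_smul measurableSet_Ioo hderiv hinj G
  rw [cos_image_Ioo] at hchg
  have step1 : (∫ x in Set.Icc (-1:ℝ) 1, G x) = ∫ x in Set.Ioo (-1:ℝ) 1, G x := by
    rw [integral_Icc_eq_integral_Ioc, integral_Ioc_eq_integral_Ioo]
  have step2 : (∫ θ in Set.Ioo (0:ℝ) Real.pi, |(-Real.sin θ)| • G (Real.cos θ))
      = ∫ θ in Set.Ioo (0:ℝ) Real.pi,
          B (Real.cos θ) * B (Real.cos ((N : ℝ) * θ)) / Real.pi := by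
    apply setIntegral_congr_fun measurableSet_Ioo
    intro θ hθ
    obtain ⟨h0, hπ⟩ := hθ
    have hsin : 0 < Real.sin θ := Real.sin_pos_of_pos_of_lt_pi h0 hπ
    have hsq : Real.sqrt (1 - Real.cos θ ^ 2) = Real.sin θ := by
      rw [show (1 : ℝ) - Real.cos θ ^ 2 = Real.sin θ ^ 2 by
        have := Real.sin_sq_add_cos_sq θ; linarith]
      exact Real.sqrt_sq hsin.le
    have hT : (T ℝ (N : ℕ)).eval (Real.cos θ) = Real.cos ((N : ℝ) * θ) := by
      rw [T_real_cos]; push_cast; ring_nf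
    simp only [hG, abs_neg, abs_of_pos hsin, smul_eq_mul, hsq, hT]
    field_simp
  have hpi_pos := Real.pi_pos
  have step3 : (∫ θ in Set.Ioo (0:ℝ) Real.pi,
      B (Real.cos θ) * B (Real.cos ((N : ℝ) * θ)) / Real.pi)
      = ∫ θ in (0:ℝ)..Real.pi, B (Real.cos θ) * B (Real.cos ((N : ℝ) * θ)) / Real.pi := by
    rw [intervalIntegral.integral_of_le hpi_pos.le, integral_Ioc_eq_integral_Ioo]
  have hexp : ∀ θ : ℝ, B (Real.cos θ) * B (Real.cos ((N : ℝ) * θ)) / Real.pi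
      = ∑ k ∈ Icc 1 L, ∑ m ∈ Icc 1 L,
          (b k * b m / Real.pi) * (Real.cos ((k:ℝ) * θ) * Real.cos (((m * N : ℕ) : ℝ) * θ)) := by
    intro θ
    have e1 : B (Real.cos θ) = ∑ k ∈ Icc 1 L, b k * Real.cos ((k:ℝ) * θ) := by
      rw [hB]
      refine Finset.sum_congr rfl fun k _ => ?_
      rw [T_real_cos]; push_cast; ring_nf
    have e2 : B (Real.cos ((N:ℝ) * θ))
        = ∑ m ∈ Icc 1 L, b m * Real.cos (((m * N : ℕ) : ℝ) * θ) := by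
      rw [hB]
      refine Finset.sum_congr rfl fun m _ => ?_
      rw [T_real_cos]; push_cast; ring_nf
    rw [e1, e2, Finset.sum_mul_sum]
    rw [Finset.sum_div]
    refine Finset.sum_congr rfl fun k _ => ?_
    rw [Finset.sum_div]
    refine Finset.sum_congr rfl fun m _ => ?_
    ring
  have step4 : (∫ θ in (0:ℝ)..Real.pi,
      B (Real.cos θ) * B (Real.cos ((N : ℝ) * θ)) / Real.pi) = 0 := by
    rw [intervalIntegral.integral_congr (fun θ _ => hexp θ)]
    rw [intervalIntegral.integral_finset_sum (fun k _ => by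
      apply Continuous.intervalIntegrable
      apply continuous_finset_sum
      intro m _
      exact continuous_const.mul ((Real.continuous_cos.comp
        (continuous_const.mul continuous_id)).mul (Real.continuous_cos.comp
        (continuous_const.mul continuous_id))))]
    apply Finset.sum_eq_zero
    intro k hk
    rw [intervalIntegral.integral_finset_sum (fun m _ => by
      exact (continuous_const.mul ((Real.continuous_cos.comp
        (continuous_const.mul continuous_id)).mul (Real.continuous_cos.comp
        (continuous_const.mul continuous_id)))).intervalIntegrable _ _)]
    apply Finset.sum_eq_zero
    intro m hm
    rw [intervalIntegral.integral_const_mul]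
    have hne : k ≠ m * N := by
      have hk' := Finset.mem_Icc.1 hk
      have hm' := Finset.mem_Icc.1 hm
      have hpN : p ≤ N := Nat.le_self_pow (by omega) p
      have : N ≤ m * N := Nat.le_mul_of_pos_left N (by omega)
      omega
    rw [cos_orth k (m * N) hne, mul_zero]
  calc (∫ x in Set.Icc (-1:ℝ) 1, G x)
      = ∫ θ in Set.Ioo (0:ℝ) Real.pi, |(-Real.sin θ)| • G (Real.cos θ) := by
        rw [step1, hchg]
    _ = 0 := by rw [step2, step3, step4]
end

section
/- Let B(x) = a_c + Σ_{m=0}^{L} a_m T_{p^m}(x) with p ≥ 2, and define σ(N) = (1/N)(⟨B²⟩−⟨B⟩²) + (2/N²) Σ_{l=1}^{N}(N−l)(⟨B·B_l⟩−⟨B⟩²) where B_l(x) = B(T_{p^l}(x)). Then for N ≥ L, σ(N) = (1/(2N))(Σ_{m=0}^{L} a_m)² − (1/N²) Σ_{l=1}^{L} Σ_{m=l}^{L} l·a_m·a_{m−l}. -/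
open Polynomial Polynomial.Chebyshev MeasureTheory Finset

section helpers
open Real Set intervalIntegral

lemma intcos_zero (k : ℤ) (hk : k ≠ 0) : ∫ θ in (0:ℝ)..π, Real.cos (k*θ) = 0 := by
  have hc : (k:ℝ) ≠ 0 := Int.cast_ne_zero.mpr hk
  rw [intervalIntegral.integral_comp_mul_left (fun x => Real.cos x) hc]
  simp [Real.sin_int_mul_pi]

lemma intcos_nat (n : ℕ) (hn : 1 ≤ n) : ∫ θ in (0:ℝ)..π, Real.cos (n*θ) = 0 := by
  have := intcos_zero (n:ℤ) (by omega)
  simpa using this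

lemma cosJ (a b : ℕ) (ha : 1 ≤ a) (hb : 1 ≤ b) :
    ∫ θ in (0:ℝ)..π, Real.cos (a*θ) * Real.cos (b*θ)
      = if a = b then π/2 else 0 := by
  have key : ∀ θ:ℝ, Real.cos (a*θ) * Real.cos (b*θ)
      = (Real.cos (((a:ℝ)-b)*θ) + Real.cos (((a:ℝ)+b)*θ))/2 := by
    intro θ
    have := Real.two_mul_cos_mul_cos (a*θ) (b*θ)
    rw [show (a:ℝ)*θ - b*θ = ((a:ℝ)-b)*θ by ring, show (a:ℝ)*θ + b*θ = ((a:ℝ)+b)*θ by ring] at this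
    linarith
  simp_rw [key]
  rw [intervalIntegral.integral_div, intervalIntegral.integral_add]
  · have h2 : ∫ θ in (0:ℝ)..π, Real.cos (((a:ℝ)+b)*θ) = 0 := by
      have := intcos_zero ((a:ℤ)+b) (by omega)
      simpa using this
    rcases eq_or_ne a b with rfl | hab
    · simp [h2]
    · have h1 : ∫ θ in (0:ℝ)..π, Real.cos (((a:ℝ)-b)*θ) = 0 := by
        have := intcos_zero ((a:ℤ)-b) (by omega)
        simpa using this
      simp [h1, h2, hab]
  · exact (Real.continuous_cos.comp (continuous_const.mul continuous_id)).intervalIntegrable _ _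
  · exact (Real.continuous_cos.comp (continuous_const.mul continuous_id)).intervalIntegrable _ _

lemma trig_lin (s : Finset ℕ) (f : ℕ → ℝ) (n : ℕ → ℕ) (hn : ∀ i ∈ s, 1 ≤ n i) :
    ∫ θ in (0:ℝ)..π, (∑ i ∈ s, f i * Real.cos ((n i : ℝ)*θ)) = 0 := by
  rw [intervalIntegral.integral_finset_sum]
  · apply Finset.sum_eq_zero
    intro i hi
    rw [intervalIntegral.integral_const_mul, intcos_nat _ (hn i hi), mul_zero]
  · intro i _
    exact (continuous_const.mul (Real.continuous_cos.comp (continuous_const.mul continuous_id))).intervalIntegrable _ _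

lemma trig_lin' (c : ℝ) (s : Finset ℕ) (f : ℕ → ℝ) (n : ℕ → ℕ) (hn : ∀ i ∈ s, 1 ≤ n i) :
    ∫ θ in (0:ℝ)..π, (c + ∑ i ∈ s, f i * Real.cos ((n i : ℝ)*θ)) = c * π := by
  have hU : Continuous fun θ : ℝ => ∑ i ∈ s, f i * Real.cos ((n i : ℝ)*θ) :=
    continuous_finset_sum _ fun i _ => continuous_const.mul
      (Real.continuous_cos.comp (continuous_const.mul continuous_id))
  rw [intervalIntegral.integral_add (continuous_const.intervalIntegrable _ _)
    (hU.intervalIntegrable _ _), trig_lin s f n hn, intervalIntegral.integral_const]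
  simp [mul_comm]

lemma trig_prod (c d : ℝ) (s t : Finset ℕ) (f g : ℕ → ℝ) (n m : ℕ → ℕ)
    (hn : ∀ i ∈ s, 1 ≤ n i) (hm : ∀ j ∈ t, 1 ≤ m j) :
    ∫ θ in (0:ℝ)..π,
      (c + ∑ i ∈ s, f i * Real.cos ((n i : ℝ)*θ)) * (d + ∑ j ∈ t, g j * Real.cos ((m j : ℝ)*θ))
      = c*d*π + (π/2) * ∑ i ∈ s, ∑ j ∈ t, f i * g j * (if n i = m j then 1 else 0) := by
  have hcos : ∀ k : ℕ, Continuous fun θ : ℝ => Real.cos ((k:ℝ)*θ) :=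
    fun k => Real.continuous_cos.comp (continuous_const.mul continuous_id)
  have hU : Continuous fun θ : ℝ => ∑ i ∈ s, f i * Real.cos ((n i : ℝ)*θ) :=
    continuous_finset_sum _ fun i _ => continuous_const.mul (hcos (n i))
  have hV : Continuous fun θ : ℝ => ∑ j ∈ t, g j * Real.cos ((m j : ℝ)*θ) :=
    continuous_finset_sum _ fun j _ => continuous_const.mul (hcos (m j))
  have hW : Continuous fun θ : ℝ => ∑ i ∈ s, ∑ j ∈ t,
      (f i * g j) * (Real.cos ((n i : ℝ)*θ) * Real.cos ((m j : ℝ)*θ)) :=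
    continuous_finset_sum _ fun i _ => continuous_finset_sum _ fun j _ =>
      continuous_const.mul ((hcos (n i)).mul (hcos (m j)))
  have iU : IntervalIntegrable (fun θ : ℝ => c * ∑ j ∈ t, g j * Real.cos ((m j : ℝ)*θ)) volume 0 π :=
    (continuous_const.mul hV).intervalIntegrable _ _
  have iV : IntervalIntegrable (fun θ : ℝ => d * ∑ i ∈ s, f i * Real.cos ((n i : ℝ)*θ)) volume 0 π :=
    (continuous_const.mul hU).intervalIntegrable _ _
  have iW : IntervalIntegrable (fun θ : ℝ => ∑ i ∈ s, ∑ j ∈ t,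
      (f i * g j) * (Real.cos ((n i : ℝ)*θ) * Real.cos ((m j : ℝ)*θ))) volume 0 π :=
    hW.intervalIntegrable _ _
  have iC : IntervalIntegrable (fun _ : ℝ => c * d) volume 0 π :=
    continuous_const.intervalIntegrable _ _
  have expand : ∀ θ : ℝ,
      (c + ∑ i ∈ s, f i * Real.cos ((n i : ℝ)*θ)) * (d + ∑ j ∈ t, g j * Real.cos ((m j : ℝ)*θ))
      = c*d + c * (∑ j ∈ t, g j * Real.cos ((m j : ℝ)*θ))
        + d * (∑ i ∈ s, f i * Real.cos ((n i : ℝ)*θ))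
        + (∑ i ∈ s, ∑ j ∈ t, (f i * g j) * (Real.cos ((n i : ℝ)*θ) * Real.cos ((m j : ℝ)*θ))) := by
    intro θ
    have hUV : (∑ i ∈ s, f i * Real.cos ((n i : ℝ)*θ)) * (∑ j ∈ t, g j * Real.cos ((m j : ℝ)*θ))
        = ∑ i ∈ s, ∑ j ∈ t, (f i * g j) * (Real.cos ((n i : ℝ)*θ) * Real.cos ((m j : ℝ)*θ)) := by
      rw [Finset.sum_mul_sum]
      apply Finset.sum_congr rfl; intro i _
      apply Finset.sum_congr rfl; intro j _
      ring
    rw [← hUV]; ring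
  simp_rw [expand]
  rw [intervalIntegral.integral_add ((iC.add iU).add iV) iW,
    intervalIntegral.integral_add (iC.add iU) iV,
    intervalIntegral.integral_add iC iU,
    intervalIntegral.integral_const_mul, intervalIntegral.integral_const_mul]
  rw [intervalIntegral.integral_const_mul, trig_lin s f n hn, trig_lin t g m hm,
    intervalIntegral.integral_const]
  have hWint : (∫ θ in (0:ℝ)..π, ∑ i ∈ s, ∑ j ∈ t,
      (f i * g j) * (Real.cos ((n i : ℝ)*θ) * Real.cos ((m j : ℝ)*θ)))
      = (π/2) * ∑ i ∈ s, ∑ j ∈ t, f i * g j * (if n i = m j then 1 else 0) := by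
    rw [intervalIntegral.integral_finset_sum (fun i _ => ((continuous_finset_sum _ fun j _ =>
      continuous_const.mul ((hcos (n i)).mul (hcos (m j)))) : Continuous fun θ : ℝ => ∑ j ∈ t,
        (f i * g j) * (Real.cos ((n i : ℝ)*θ) * Real.cos ((m j : ℝ)*θ))).intervalIntegrable _ _)]
    rw [Finset.mul_sum]
    apply Finset.sum_congr rfl; intro i hi
    rw [intervalIntegral.integral_finset_sum (f := fun j θ =>
        (f i * g j) * (Real.cos ((n i : ℝ)*θ) * Real.cos ((m j : ℝ)*θ))) (fun j _ =>
      ((continuous_const.mul ((hcos (n i)).mul (hcos (m j)))) : Continuous fun θ : ℝ =>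
        (f i * g j) * (Real.cos ((n i : ℝ)*θ) * Real.cos ((m j : ℝ)*θ))).intervalIntegrable _ _)]
    rw [Finset.mul_sum]
    apply Finset.sum_congr rfl; intro j hj
    rw [intervalIntegral.integral_const_mul, cosJ _ _ (hn i hi) (hm j hj)]
    by_cases h : n i = m j <;> simp [h] <;> ring
  rw [hWint]
  simp
  ring

lemma integrable_weight : IntegrableOn (fun x : ℝ => 1 / Real.sqrt (1 - x^2)) (Set.Icc (-1:ℝ) 1) := by
  have h : IntegrableOn (fun x : ℝ => 1 / Real.sqrt (1 - x^2)) (Set.Ioc (-1:ℝ) 1) := by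
    apply integrableOn_deriv_of_nonneg (g := Real.arcsin)
    · exact Real.continuous_arcsin.continuousOn
    · intro x hx
      exact Real.hasDerivAt_arcsin (by exact ne_of_gt hx.1) (ne_of_lt hx.2)
    · intro x hx; positivity
  rwa [integrableOn_Icc_iff_integrableOn_Ioc]

lemma key_ae (Q : ℝ → ℝ) (hQ : Continuous Q) :
    (fun θ : ℝ => (-Real.sin θ) • ((fun x => Q x * (1/(π * Real.sqrt (1 - x^2)))) ∘ Real.cos) θ)
      =ᵐ[volume.restrict (Set.uIcc (0:ℝ) π)] (fun θ : ℝ => -(1/π) * Q (Real.cos θ)) := by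
  have h0 : ∀ᵐ θ : ℝ ∂(volume.restrict (Set.uIcc (0:ℝ) π)), θ ≠ 0 := by
    apply ae_restrict_of_ae
    refine (ae_iff).mpr ?_
    simpa using Real.volume_singleton (a := (0:ℝ))
  have hpi : ∀ᵐ θ : ℝ ∂(volume.restrict (Set.uIcc (0:ℝ) π)), θ ≠ π := by
    apply ae_restrict_of_ae
    refine (ae_iff).mpr ?_
    simpa using Real.volume_singleton (a := π)
  have hmem : ∀ᵐ θ : ℝ ∂(volume.restrict (Set.uIcc (0:ℝ) π)), θ ∈ Set.uIcc (0:ℝ) π :=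
    ae_restrict_mem measurableSet_uIcc
  filter_upwards [h0, hpi, hmem] with θ h0 hpi hmem
  rw [Set.uIcc_of_le Real.pi_pos.le] at hmem
  have hθ : θ ∈ Set.Ioo (0:ℝ) π := ⟨lt_of_le_of_ne hmem.1 (Ne.symm h0), lt_of_le_of_ne hmem.2 hpi⟩
  have hs : 0 < Real.sin θ := Real.sin_pos_of_pos_of_lt_pi hθ.1 hθ.2
  have hsq : Real.sqrt (1 - Real.cos θ^2) = Real.sin θ := by
    rw [show 1 - Real.cos θ^2 = Real.sin θ^2 by
      have := Real.sin_sq_add_cos_sq θ; linarith]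
    exact Real.sqrt_sq hs.le
  simp only [Function.comp_apply, smul_eq_mul, hsq]
  field_simp

lemma subst_cheb (Q : ℝ → ℝ) (hQ : Continuous Q) :
    ∫ x in Set.Icc (-1:ℝ) 1, Q x * (1/(π * Real.sqrt (1 - x^2)))
      = (1/π) * ∫ θ in (0:ℝ)..π, Q (Real.cos θ) := by
  set g : ℝ → ℝ := fun x => Q x * (1/(π * Real.sqrt (1 - x^2))) with hg
  obtain ⟨M, hM⟩ := isCompact_Icc.exists_bound_of_continuousOn (hQ.continuousOn (s := Set.Icc (-1:ℝ) 1))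
  have hMnn : 0 ≤ M := le_trans (norm_nonneg _) (hM 0 (by norm_num))
  have hgm : ∀ s : Set ℝ, AEStronglyMeasurable g (volume.restrict s) := by
    intro s
    apply Measurable.aestronglyMeasurable
    exact (hQ.measurable).mul ((measurable_const.mul ((measurable_const.sub (measurable_id.pow_const 2)).sqrt)).const_div 1)
  have hg1 : IntegrableOn g (Set.Icc (-1:ℝ) 1) := by
    apply Integrable.mono (g := fun x => (M/π) * (1 / Real.sqrt (1 - x^2)))
    · exact integrable_weight.const_mul _
    · exact hgm _
    · refine (ae_restrict_mem measurableSet_Icc).mono fun x hx => ?_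
      have hw : (0:ℝ) ≤ 1/Real.sqrt (1 - x^2) := div_nonneg one_pos.le (Real.sqrt_nonneg _)
      have hw2 : (0:ℝ) ≤ 1/(π * Real.sqrt (1 - x^2)) :=
        div_nonneg one_pos.le (mul_nonneg Real.pi_pos.le (Real.sqrt_nonneg _))
      have h1 : ‖g x‖ = ‖Q x‖ * (1/(π * Real.sqrt (1 - x^2))) := by
        rw [hg]; simp only [norm_mul]
        congr 1
        rw [Real.norm_eq_abs, abs_of_nonneg hw2]
      rw [h1]
      refine le_trans ?_ ((Real.norm_eq_abs _) ▸ le_abs_self _)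
      calc ‖Q x‖ * (1/(π * Real.sqrt (1 - x^2)))
          ≤ M * (1/(π * Real.sqrt (1 - x^2))) :=
            mul_le_mul_of_nonneg_right (hM x hx) hw2
        _ = M/π * (1/Real.sqrt (1 - x^2)) := by
            rw [mul_comm π]
            rw [one_div, mul_inv]
            ring
  have hsub : (∫ θ in (0:ℝ)..π, (-Real.sin θ) • (g ∘ Real.cos) θ)
      = ∫ u in (Real.cos 0)..(Real.cos π), g u := by
    apply intervalIntegral.integral_comp_smul_deriv''' (f := Real.cos) (f' := fun θ => -Real.sin θ)
    · exact Real.continuous_cos.continuousOn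
    · intro x _
      exact (Real.hasDerivAt_cos x).hasDerivWithinAt
    · have himg : Real.cos '' Set.Ioo (min 0 π) (max 0 π) ⊆ Set.Ioo (-1:ℝ) 1 := by
        rw [min_eq_left Real.pi_pos.le, max_eq_right Real.pi_pos.le]
        rintro _ ⟨θ, hθ, rfl⟩
        constructor
        · have := Real.strictAntiOn_cos (Set.mem_Icc.mpr ⟨hθ.1.le, hθ.2.le⟩)
            (Set.mem_Icc.mpr ⟨Real.pi_pos.le, le_refl π⟩) hθ.2
          simpa [Real.cos_pi] using this
        · have := Real.strictAntiOn_cos (Set.mem_Icc.mpr ⟨le_refl (0:ℝ), Real.pi_pos.le⟩)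
            (Set.mem_Icc.mpr ⟨hθ.1.le, hθ.2.le⟩) hθ.1
          simpa [Real.cos_zero] using this
      apply ContinuousOn.mono _ himg
      intro x hx
      have h1 : (0:ℝ) < 1 - x^2 := by nlinarith [hx.1, hx.2]
      apply ContinuousAt.continuousWithinAt
      apply hQ.continuousAt.mul
      apply ContinuousAt.div continuousAt_const
      · exact (continuousAt_const.mul ((continuous_const.sub (continuous_pow 2)).continuousAt.sqrt))
      · positivity
    · apply hg1.mono_set
      intro x hx
      obtain ⟨θ, _, rfl⟩ := hx
      exact Set.mem_Icc.mpr ⟨Real.neg_one_le_cos θ, Real.cos_le_one θ⟩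
    · have hcont : Continuous fun θ : ℝ => -(1/π) * Q (Real.cos θ) :=
        continuous_const.mul (hQ.comp Real.continuous_cos)
      exact (hcont.integrableOn_uIcc).congr (key_ae Q hQ).symm
  have h1 : (∫ θ in (0:ℝ)..π, (-Real.sin θ) • (g ∘ Real.cos) θ)
      = ∫ θ in (0:ℝ)..π, -(1/π) * Q (Real.cos θ) := by
    rw [intervalIntegral.integral_of_le Real.pi_pos.le,
      intervalIntegral.integral_of_le Real.pi_pos.le]
    have hae2 : (fun θ : ℝ => (-Real.sin θ) • ((fun x => Q x * (1/(π * Real.sqrt (1 - x^2)))) ∘ Real.cos) θ)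
        =ᵐ[volume.restrict (Set.Ioc (0:ℝ) π)] (fun θ : ℝ => -(1/π) * Q (Real.cos θ)) :=
      ae_restrict_of_ae_restrict_of_subset
        (Set.Ioc_subset_Icc_self.trans Set.Icc_subset_uIcc) (key_ae Q hQ)
    exact integral_congr_ae hae2
  have h2 : (∫ u in (Real.cos 0)..(Real.cos π), g u) = - ∫ x in Set.Icc (-1:ℝ) 1, g x := by
    rw [Real.cos_zero, Real.cos_pi]
    rw [intervalIntegral.integral_symm]
    rw [intervalIntegral.integral_of_le (by norm_num : (-1:ℝ) ≤ 1)]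
    rw [integral_Icc_eq_integral_Ioc]
  have h3 : (∫ θ in (0:ℝ)..π, -(1/π) * Q (Real.cos θ))
      = -(1/π) * ∫ θ in (0:ℝ)..π, Q (Real.cos θ) := intervalIntegral.integral_const_mul _ _
  rw [h1, h3, h2] at hsub
  have hπ : (1:ℝ)/π ≠ 0 := by positivity
  nlinarith [hsub]

lemma sq_expand (a : ℕ → ℝ) (n : ℕ) :
    (∑ m ∈ range n, a m)^2
      = ∑ m ∈ range n, (a m)^2 + 2 * ∑ m ∈ range n, ∑ k ∈ range m, a m * a k := by
  induction n with
  | zero => simp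
  | succ n ih =>
    rw [Finset.sum_range_succ, Finset.sum_range_succ (f := fun m => (a m)^2),
      Finset.sum_range_succ (f := fun m => ∑ k ∈ range m, a m * a k), ← Finset.mul_sum, add_sq, ih]
    ring

lemma swap_tri (L : ℕ) (F : ℕ → ℕ → ℝ) :
    ∑ l ∈ Icc 1 L, ∑ m ∈ Icc l L, F l m = ∑ m ∈ range (L+1), ∑ l ∈ Icc 1 m, F l m := by
  rw [Finset.sum_sigma', Finset.sum_sigma']
  apply Finset.sum_nbij' (i := fun q => ⟨q.2, q.1⟩) (j := fun q => ⟨q.2, q.1⟩)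
  · rintro ⟨l, m⟩ hq
    simp only [Finset.mem_sigma, Finset.mem_Icc, Finset.mem_range] at hq ⊢
    omega
  · rintro ⟨m, l⟩ hq
    simp only [Finset.mem_sigma, Finset.mem_Icc, Finset.mem_range] at hq ⊢
    omega
  · rintro ⟨l, m⟩ _; rfl
  · rintro ⟨m, l⟩ _; rfl
  · rintro ⟨l, m⟩ _; rfl

lemma inner_reindex (a : ℕ → ℝ) (m : ℕ) :
    ∑ l ∈ Icc 1 m, a m * a (m - l) = ∑ k ∈ range m, a m * a k := by
  apply Finset.sum_nbij' (i := fun l => m - l) (j := fun k => m - k)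
  · intro l hl; simp only [Finset.mem_Icc, Finset.mem_range] at *; omega
  · intro k hk; simp only [Finset.mem_Icc, Finset.mem_range] at *; omega
  · intro l hl; simp only [Finset.mem_Icc] at hl; omega
  · intro k hk; simp only [Finset.mem_range] at hk; omega
  · intro l _; rfl

lemma sq_sum_tri (a : ℕ → ℝ) (L : ℕ) :
    (∑ m ∈ range (L+1), a m)^2
      = ∑ m ∈ range (L+1), (a m)^2
        + 2 * ∑ l ∈ Icc 1 L, ∑ m ∈ Icc l L, a m * a (m - l) := by
  rw [sq_expand, swap_tri L (fun l m => a m * a (m - l))]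
  congr 2
  apply Finset.sum_congr rfl
  intro m _
  exact (inner_reindex a m).symm

lemma diag_sum (a : ℕ → ℝ) (L p : ℕ) (hp : 2 ≤ p) :
    ∑ i ∈ range (L+1), ∑ j ∈ range (L+1),
      a i * a j * (if p ^ i = p ^ j then (1:ℝ) else 0)
      = ∑ m ∈ range (L+1), (a m)^2 := by
  apply Finset.sum_congr rfl
  intro i hi
  rw [Finset.sum_eq_single i]
  · simp [pow_two]
  · intro j _ hne
    have : p ^ i ≠ p ^ j := fun h => hne (Nat.pow_right_injective hp h).symm
    simp [this]
  · intro h; exact (h hi).elim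

lemma shift_sum (a : ℕ → ℝ) (L p l : ℕ) (hp : 2 ≤ p) :
    ∑ i ∈ range (L+1), ∑ j ∈ range (L+1),
      a i * a j * (if p ^ i = p ^ (j + l) then (1:ℝ) else 0)
      = ∑ m ∈ Icc l L, a m * a (m - l) := by
  have key : ∀ i ∈ range (L+1), (∑ j ∈ range (L+1),
      a i * a j * (if p ^ i = p ^ (j + l) then (1:ℝ) else 0))
      = if l ≤ i then a i * a (i - l) else 0 := by
    intro i hi
    rw [Finset.mem_range] at hi
    rcases le_or_gt l i with h | h
    · rw [Finset.sum_eq_single (i - l)]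
      · have : p ^ i = p ^ (i - l + l) := by congr 1; omega
        simp [this, h]
      · intro j _ hne
        have : p ^ i ≠ p ^ (j + l) := fun hEq => by
          have := Nat.pow_right_injective hp hEq; omega
        simp [this]
      · intro hni; exact (hni (Finset.mem_range.mpr (by omega))).elim
    · rw [if_neg (not_le.mpr h)]
      apply Finset.sum_eq_zero
      intro j _
      have : p ^ i ≠ p ^ (j + l) := fun hEq => by
        have := Nat.pow_right_injective hp hEq; omega
      simp [this]
  rw [Finset.sum_congr rfl key, Finset.sum_ite, Finset.sum_const_zero, add_zero]
  apply Finset.sum_congr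
  · ext m; simp only [Finset.mem_filter, Finset.mem_range, Finset.mem_Icc]; omega
  · intros; rfl
end helpers


/-- exact expected squared error for `B = a_c + Σ_{m=0}^L a_m T_{p^m}`
under the `p`-th Chebyshev map, for `N ≥ L`. -/
theorem chebyshev_error_variance_formula
    (L : ℕ) (ac : ℝ) (a : ℕ → ℝ) (p : ℕ) (hp : 2 ≤ p)
    (B : ℝ → ℝ)
    (hB : ∀ x, B x = ac + ∑ m ∈ range (L + 1), a m * (T ℝ (p ^ m : ℕ)).eval x)
    (σ : ℕ → ℝ)
    (hσ : ∀ N : ℕ, σ N =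
      (1 / (N : ℝ)) *
        ((∫ x in Set.Icc (-1 : ℝ) 1, B x ^ 2 * (1 / (Real.pi * Real.sqrt (1 - x ^ 2))))
          - (∫ x in Set.Icc (-1 : ℝ) 1, B x * (1 / (Real.pi * Real.sqrt (1 - x ^ 2)))) ^ 2)
      + (2 / (N : ℝ) ^ 2) * ∑ l ∈ Icc 1 N, ((N : ℝ) - (l : ℝ)) *
          ((∫ x in Set.Icc (-1 : ℝ) 1,
              B x * B ((T ℝ (p ^ l : ℕ)).eval x) * (1 / (Real.pi * Real.sqrt (1 - x ^ 2))))
            - (∫ x in Set.Icc (-1 : ℝ) 1, B x * (1 / (Real.pi * Real.sqrt (1 - x ^ 2)))) ^ 2))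
    (N : ℕ) (hN : L ≤ N) (hN1 : 1 ≤ N) :
    σ N = (1 / (2 * (N : ℝ))) * (∑ m ∈ range (L + 1), a m) ^ 2
      - (1 / (N : ℝ) ^ 2) * ∑ l ∈ Icc 1 L, ∑ m ∈ Icc l L, (l : ℝ) * a m * a (m - l) := by
  have hpow : ∀ k : ℕ, 1 ≤ p ^ k := fun k => Nat.one_le_pow _ _ (by omega)
  have hBc : Continuous B := by
    have : B = fun x => ac + ∑ m ∈ range (L + 1), a m * (T ℝ (p ^ m : ℕ)).eval x := funext hB
    rw [this]
    exact continuous_const.add (continuous_finset_sum _ fun m _ =>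
      continuous_const.mul ((T ℝ (p ^ m : ℕ)).continuous))
  have hBcos : ∀ θ : ℝ, B (Real.cos θ)
      = ac + ∑ m ∈ range (L + 1), a m * Real.cos (((p ^ m : ℕ) : ℝ) * θ) := by
    intro θ
    rw [hB]
    congr 1
    apply Finset.sum_congr rfl
    intro m _
    rw [Polynomial.Chebyshev.T_real_cos]
    norm_num
  have hBcos' : ∀ l : ℕ, ∀ θ : ℝ, B ((T ℝ (p ^ l : ℕ)).eval (Real.cos θ))
      = ac + ∑ m ∈ range (L + 1), a m * Real.cos (((p ^ (m + l) : ℕ) : ℝ) * θ) := by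
    intro l θ
    rw [Polynomial.Chebyshev.T_real_cos, show ((p ^ l : ℕ) : ℤ) * θ = ((p ^ l : ℕ) : ℝ) * θ by
      push_cast; ring]
    rw [hBcos]
    congr 1
    apply Finset.sum_congr rfl
    intro m _
    congr 1
    push_cast [pow_add]
    ring
  -- the three integrals
  have hE1 : (∫ x in Set.Icc (-1 : ℝ) 1, B x * (1 / (Real.pi * Real.sqrt (1 - x ^ 2)))) = ac := by
    rw [subst_cheb B hBc]
    rw [intervalIntegral.integral_congr (g := fun θ =>
      ac + ∑ m ∈ range (L + 1), a m * Real.cos (((p ^ m : ℕ) : ℝ) * θ))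
      (fun θ _ => hBcos θ)]
    rw [trig_lin' ac (range (L+1)) a (fun m => p ^ m) (fun m _ => hpow m)]
    field_simp
  have hE2 : (∫ x in Set.Icc (-1 : ℝ) 1, B x ^ 2 * (1 / (Real.pi * Real.sqrt (1 - x ^ 2))))
      = ac ^ 2 + (1/2) * ∑ m ∈ range (L + 1), (a m)^2 := by
    rw [subst_cheb (fun x => B x ^ 2) (hBc.pow 2)]
    rw [intervalIntegral.integral_congr (g := fun θ =>
      (ac + ∑ m ∈ range (L + 1), a m * Real.cos (((p ^ m : ℕ) : ℝ) * θ)) *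
      (ac + ∑ m ∈ range (L + 1), a m * Real.cos (((p ^ m : ℕ) : ℝ) * θ)))
      (fun θ _ => by simp only; rw [pow_two, hBcos θ])]
    rw [trig_prod ac ac (range (L+1)) (range (L+1)) a a (fun m => p ^ m) (fun m => p ^ m)
      (fun m _ => hpow m) (fun m _ => hpow m)]
    rw [diag_sum a L p hp]
    have hπ : Real.pi ≠ 0 := Real.pi_ne_zero
    field_simp
  have hE3 : ∀ l : ℕ, (∫ x in Set.Icc (-1 : ℝ) 1,
        B x * B ((T ℝ (p ^ l : ℕ)).eval x) * (1 / (Real.pi * Real.sqrt (1 - x ^ 2))))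
      = ac ^ 2 + (1/2) * ∑ m ∈ Icc l L, a m * a (m - l) := by
    intro l
    rw [subst_cheb (fun x => B x * B ((T ℝ (p ^ l : ℕ)).eval x))
      (hBc.mul (hBc.comp (T ℝ (p ^ l : ℕ)).continuous))]
    rw [intervalIntegral.integral_congr (g := fun θ =>
      (ac + ∑ m ∈ range (L + 1), a m * Real.cos (((p ^ m : ℕ) : ℝ) * θ)) *
      (ac + ∑ m ∈ range (L + 1), a m * Real.cos (((p ^ (m + l) : ℕ) : ℝ) * θ)))
      (fun θ _ => by simp only; rw [hBcos θ, hBcos' l θ])]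
    rw [trig_prod ac ac (range (L+1)) (range (L+1)) a a (fun m => p ^ m) (fun m => p ^ (m + l))
      (fun m _ => hpow m) (fun m _ => hpow (m + l))]
    rw [shift_sum a L p l hp]
    have hπ : Real.pi ≠ 0 := Real.pi_ne_zero
    field_simp
  rw [hσ N, hE1, hE2]
  have hsum : (∑ l ∈ Icc 1 N, ((N : ℝ) - (l : ℝ)) *
      ((∫ x in Set.Icc (-1 : ℝ) 1,
          B x * B ((T ℝ (p ^ l : ℕ)).eval x) * (1 / (Real.pi * Real.sqrt (1 - x ^ 2)))) - ac ^ 2))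
      = ∑ l ∈ Icc 1 L, ((N : ℝ) - (l : ℝ)) * ((1/2) * ∑ m ∈ Icc l L, a m * a (m - l)) := by
    rw [← Finset.sum_subset (Finset.Icc_subset_Icc_right hN)]
    · apply Finset.sum_congr rfl
      intro l _
      rw [hE3 l]
      ring_nf
    · intro l hl hnl
      rw [hE3 l]
      have hlL : L < l := by
        simp only [Finset.mem_Icc] at hl hnl
        omega
      rw [Finset.Icc_eq_empty (by omega)]
      simp
  rw [hsum]
  -- final algebra
  have hNpos : (0:ℝ) < N := by exact_mod_cast hN1
  have hNne : (N:ℝ) ≠ 0 := ne_of_gt hNpos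
  rw [sq_sum_tri a L]
  have e1 : ∑ l ∈ Icc 1 L, ((N : ℝ) - (l : ℝ)) * ((1/2) * ∑ m ∈ Icc l L, a m * a (m - l))
      = (N:ℝ)/2 * (∑ l ∈ Icc 1 L, ∑ m ∈ Icc l L, a m * a (m - l))
        - (1/2) * ∑ l ∈ Icc 1 L, (l:ℝ) * ∑ m ∈ Icc l L, a m * a (m - l) := by
    rw [Finset.mul_sum, Finset.mul_sum, ← Finset.sum_sub_distrib]
    apply Finset.sum_congr rfl
    intro l _
    ring
  have e2 : ∑ l ∈ Icc 1 L, ∑ m ∈ Icc l L, (l : ℝ) * a m * a (m - l)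
      = ∑ l ∈ Icc 1 L, (l:ℝ) * ∑ m ∈ Icc l L, a m * a (m - l) := by
    apply Finset.sum_congr rfl
    intro l _
    rw [Finset.mul_sum]
    apply Finset.sum_congr rfl
    intro m _
    ring
  rw [e1, e2]
  field_simp
  ring
end

section
/- With the same setup, if Σ_{m=0}^{L} a_m = 0, then σ(N) = −(1/N²) Σ_{l=1}^{L} Σ_{m=l}^{L} l·a_m·a_{m−l}, so σ(N) = O(1/N²); in particular the O(1/N) term vanishes. -/
open Polynomial Polynomial.Chebyshev MeasureTheory Finset Asymptotics

lemma integ_w : IntegrableOn (fun x : ℝ => 1 / Real.sqrt (1 - x ^ 2)) (Set.Ioc (-1 : ℝ) 1) := by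
  apply intervalIntegral.integrableOn_deriv_of_nonneg (g := Real.arcsin)
  · exact Real.continuous_arcsin.continuousOn
  · intro x hx; exact Real.hasDerivAt_arcsin (ne_of_gt hx.1) (ne_of_lt hx.2)
  · intro x hx; positivity

lemma integ_w' (g : ℝ → ℝ) (hg : Continuous g) :
    IntegrableOn (fun x : ℝ => g x * (1 / (Real.pi * Real.sqrt (1 - x ^ 2))))
      (Set.Icc (-1 : ℝ) 1) := by
  have h1 : IntegrableOn (fun x : ℝ => 1 / (Real.pi * Real.sqrt (1 - x ^ 2)))
      (Set.Icc (-1 : ℝ) 1) := by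
    rw [integrableOn_Icc_iff_integrableOn_Ioc]
    refine IntegrableOn.congr_fun (integ_w.const_mul (1 / Real.pi)) (fun x _ => ?_) measurableSet_Ioc
    field_simp
  exact IntegrableOn.continuousOn_mul hg.continuousOn h1 isCompact_Icc

lemma cov (g : ℝ → ℝ) (hg : Continuous g) :
    ∫ x in Set.Icc (-1:ℝ) 1, g x * (1 / (Real.pi * Real.sqrt (1 - x ^ 2)))
      = (1 / Real.pi) * ∫ θ in (0:ℝ)..Real.pi, g (Real.cos θ) := by
  set G : ℝ → ℝ := fun u => g u * (1 / (Real.pi * Real.sqrt (1 - u ^ 2))) with hG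
  have hsub : Real.cos '' (Set.Ioo 0 Real.pi) ⊆ Set.Ioo (-1 : ℝ) 1 := by
    rintro y ⟨x, hx, rfl⟩
    constructor
    · have := Real.cos_lt_cos_of_nonneg_of_le_pi (le_of_lt hx.1) le_rfl hx.2
      simpa [Real.cos_pi] using this
    · have := Real.cos_lt_cos_of_nonneg_of_le_pi (le_refl (0:ℝ)) hx.2.le hx.1
      simpa [Real.cos_zero] using this
  have hGcont : ContinuousOn G (Set.Ioo (-1 : ℝ) 1) := by
    apply hg.continuousOn.mul
    apply ContinuousOn.div continuousOn_const
    · exact (continuous_const.mul ((continuous_const.sub (continuous_pow 2)).sqrt)).continuousOn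
    · intro x hx
      have h1 : 0 < 1 - x ^ 2 := by nlinarith [hx.1, hx.2]
      have : 0 < Real.sqrt (1 - x ^ 2) := Real.sqrt_pos.mpr h1
      positivity
  have key := intervalIntegral.integral_comp_smul_deriv''' (a := (0:ℝ)) (b := Real.pi)
    (f := Real.cos) (f' := fun θ => -Real.sin θ) (g := G)
    (Real.continuous_cos.continuousOn)
    (fun x _ => (Real.hasDerivAt_cos x).hasDerivWithinAt)
    (by
      rw [min_def, max_def]
      simp only [if_pos Real.pi_pos.le]
      exact hGcont.mono hsub)
    (by
      refine (integ_w' g hg).mono_set ?_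
      rintro y ⟨x, _, rfl⟩
      exact ⟨Real.neg_one_le_cos x, Real.cos_le_one x⟩)
    (by
      rw [Set.uIcc_of_le Real.pi_pos.le, integrableOn_Icc_iff_integrableOn_Ioo]
      have hcont : Continuous fun x : ℝ => -(1 / Real.pi) * g (Real.cos x) :=
        continuous_const.mul (hg.comp Real.continuous_cos)
      refine ((hcont.continuousOn.integrableOn_Icc).mono_set Set.Ioo_subset_Icc_self).congr_fun (fun x hx => ?_) measurableSet_Ioo
      have hsin : 0 < Real.sin x := Real.sin_pos_of_pos_of_lt_pi hx.1 hx.2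
      have hs : Real.sqrt (1 - Real.cos x ^ 2) = Real.sin x := by
        rw [show (1 : ℝ) - Real.cos x ^ 2 = Real.sin x ^ 2 by
          nlinarith [Real.sin_sq_add_cos_sq x]]
        exact Real.sqrt_sq hsin.le
      simp only [Function.comp, hG, smul_eq_mul, hs]
      field_simp)
  have h2 : ∫ x in (0:ℝ)..Real.pi, (fun θ => -Real.sin θ) x • (G ∘ Real.cos) x
      = ∫ x in (0:ℝ)..Real.pi, -((1 / Real.pi) * g (Real.cos x)) := by
    apply intervalIntegral.integral_congr_ae
    have hpi : ∀ᵐ x : ℝ, x ≠ Real.pi := by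
      have h0 : (volume : Measure ℝ) {Real.pi} = 0 := measure_singleton Real.pi
      rw [MeasureTheory.ae_iff]
      convert h0 using 2
      ext x; simp
    filter_upwards [hpi] with x hx hxI
    rw [Set.uIoc_of_le Real.pi_pos.le] at hxI
    have hsin : 0 < Real.sin x :=
      Real.sin_pos_of_pos_of_lt_pi hxI.1 (lt_of_le_of_ne hxI.2 hx)
    have hs : Real.sqrt (1 - Real.cos x ^ 2) = Real.sin x := by
      rw [show (1 : ℝ) - Real.cos x ^ 2 = Real.sin x ^ 2 by
        nlinarith [Real.sin_sq_add_cos_sq x]]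
      exact Real.sqrt_sq hsin.le
    simp only [Function.comp, hG, smul_eq_mul, hs]
    field_simp
  rw [h2, Real.cos_zero, Real.cos_pi, intervalIntegral.integral_neg,
    intervalIntegral.integral_const_mul, intervalIntegral.integral_symm (-1:ℝ) 1] at key
  rw [MeasureTheory.integral_Icc_eq_integral_Ioc,
    ← intervalIntegral.integral_of_le (by norm_num : (-1:ℝ) ≤ 1)]
  linarith [key]

lemma trig0 (n : ℤ) : ∫ θ in (0:ℝ)..Real.pi, Real.cos (n * θ) = if n = 0 then Real.pi else 0 := by
  split_ifs with h
  · simp [h]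
  · have hc : ((n : ℝ)) ≠ 0 := by exact_mod_cast h
    have := intervalIntegral.integral_comp_mul_left (f := Real.cos) (a := (0:ℝ))
      (b := Real.pi) (c := (n:ℝ)) hc
    rw [this]
    simp [Real.sin_int_mul_pi]

lemma trigprod (n k : ℤ) (hn : 0 < n) (hk : 0 < k) :
    ∫ θ in (0:ℝ)..Real.pi, Real.cos (n * θ) * Real.cos (k * θ)
      = if n = k then Real.pi / 2 else 0 := by
  have h1 : ∀ θ : ℝ, Real.cos (n * θ) * Real.cos (k * θ)
      = (Real.cos (((n - k : ℤ) : ℝ) * θ) + Real.cos (((n + k : ℤ) : ℝ) * θ)) / 2 := by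
    intro θ
    have := Real.two_mul_cos_mul_cos ((n : ℝ) * θ) ((k : ℝ) * θ)
    push_cast
    push_cast at this
    rw [sub_mul, add_mul]
    linarith [this]
  have h2 : (∫ θ in (0:ℝ)..Real.pi, Real.cos (n * θ) * Real.cos (k * θ))
      = (∫ θ in (0:ℝ)..Real.pi,
          (Real.cos (((n - k : ℤ) : ℝ) * θ) + Real.cos (((n + k : ℤ) : ℝ) * θ)) / 2) := by
    exact intervalIntegral.integral_congr (fun θ _ => h1 θ)
  rw [h2]
  have i1 : IntervalIntegrable (fun θ : ℝ => Real.cos (((n - k : ℤ) : ℝ) * θ)) volume 0 Real.pi :=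
    (Real.continuous_cos.comp (continuous_const.mul continuous_id)).intervalIntegrable _ _
  have i2 : IntervalIntegrable (fun θ : ℝ => Real.cos (((n + k : ℤ) : ℝ) * θ)) volume 0 Real.pi :=
    (Real.continuous_cos.comp (continuous_const.mul continuous_id)).intervalIntegrable _ _
  rw [intervalIntegral.integral_div, intervalIntegral.integral_add i1 i2,
    trig0 (n - k), trig0 (n + k)]
  have hnk : n + k ≠ 0 := by omega
  rcases eq_or_ne n k with h3 | h3
  · simp [h3, hnk, sub_self, hk.ne']
  · have h4 : n - k ≠ 0 := by omega
    simp [h3, h4, hnk]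

lemma trig0' (n : ℕ) (hn : n ≠ 0) : ∫ θ in (0:ℝ)..Real.pi, Real.cos ((n:ℝ) * θ) = 0 := by
  have h := trig0 (n : ℤ)
  have h2 : ((n:ℤ):ℝ) = (n:ℝ) := by push_cast; rfl
  rw [h2] at h
  rw [h]
  simp [hn]

lemma trigprod' (n k : ℕ) (hn : 0 < n) (hk : 0 < k) :
    ∫ θ in (0:ℝ)..Real.pi, Real.cos ((n:ℝ) * θ) * Real.cos ((k:ℝ) * θ)
      = if n = k then Real.pi / 2 else 0 := by
  have h := trigprod (n : ℤ) (k : ℤ) (by exact_mod_cast hn) (by exact_mod_cast hk)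
  have h2 : ((n:ℤ):ℝ) = (n:ℝ) := by push_cast; rfl
  have h3 : ((k:ℤ):ℝ) = (k:ℝ) := by push_cast; rfl
  rw [h2, h3] at h
  rw [h]
  by_cases h4 : n = k
  · simp [h4]
  · have : (n:ℤ) ≠ (k:ℤ) := by exact_mod_cast h4
    simp [h4, this]

lemma intBB (ac ac' : ℝ) (a b : ℕ → ℝ) (c d : ℕ → ℕ) (hc : ∀ m, 0 < c m)
    (hd : ∀ m, 0 < d m) (L K : ℕ) :
    ∫ θ in (0:ℝ)..Real.pi,
        (ac + ∑ m ∈ Finset.range (L+1), a m * Real.cos ((c m : ℝ) * θ))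
        * (ac' + ∑ m ∈ Finset.range (K+1), b m * Real.cos ((d m : ℝ) * θ))
      = ac * ac' * Real.pi + (Real.pi / 2) * ∑ m ∈ Finset.range (L+1),
          ∑ m' ∈ Finset.range (K+1), (if c m = d m' then a m * b m' else 0) := by
  have ccont : ∀ (e : ℕ), Continuous (fun θ : ℝ => Real.cos ((e : ℝ) * θ)) := fun e =>
    Real.continuous_cos.comp (continuous_const.mul continuous_id)
  have hS : ∀ (e : ℕ → ℕ) (u : ℕ → ℝ) (n : ℕ),
      Continuous (fun θ : ℝ => ∑ m ∈ Finset.range n, u m * Real.cos ((e m : ℝ) * θ)) := by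
    intro e u n
    exact continuous_finset_sum _ fun m _ => continuous_const.mul (ccont (e m))
  have step : ∫ θ in (0:ℝ)..Real.pi,
        (ac + ∑ m ∈ Finset.range (L+1), a m * Real.cos ((c m : ℝ) * θ))
        * (ac' + ∑ m ∈ Finset.range (K+1), b m * Real.cos ((d m : ℝ) * θ))
      = ∫ θ in (0:ℝ)..Real.pi,
        (ac * ac' + (ac * (∑ m ∈ Finset.range (K+1), b m * Real.cos ((d m : ℝ) * θ))
          + (ac' * (∑ m ∈ Finset.range (L+1), a m * Real.cos ((c m : ℝ) * θ))
            + ∑ m ∈ Finset.range (L+1), ∑ m' ∈ Finset.range (K+1),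
                (a m * b m') * (Real.cos ((c m : ℝ) * θ) * Real.cos ((d m' : ℝ) * θ))))) := by
    refine intervalIntegral.integral_congr (fun θ _ => ?_)
    have e1 : (∑ m ∈ Finset.range (L+1), a m * Real.cos ((c m : ℝ) * θ))
        * (∑ m' ∈ Finset.range (K+1), b m' * Real.cos ((d m' : ℝ) * θ))
        = ∑ m ∈ Finset.range (L+1), ∑ m' ∈ Finset.range (K+1),
            (a m * b m') * (Real.cos ((c m : ℝ) * θ) * Real.cos ((d m' : ℝ) * θ)) := by
      rw [Finset.sum_mul_sum]
      exact Finset.sum_congr rfl fun m _ => Finset.sum_congr rfl fun m' _ => by ring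
    rw [← e1]
    ring
  rw [step]
  have idbl : Continuous (fun θ : ℝ => ∑ m ∈ Finset.range (L+1), ∑ m' ∈ Finset.range (K+1),
      (a m * b m') * (Real.cos ((c m : ℝ) * θ) * Real.cos ((d m' : ℝ) * θ))) := by
    refine continuous_finset_sum _ fun m _ => continuous_finset_sum _ fun m' _ => ?_
    exact continuous_const.mul ((ccont (c m)).mul (ccont (d m')))
  have iT : IntervalIntegrable (fun θ : ℝ => ac * ∑ m ∈ Finset.range (K+1),
      b m * Real.cos ((d m : ℝ) * θ)) volume 0 Real.pi :=
    (continuous_const.mul (hS d b (K+1))).intervalIntegrable _ _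
  have iS : IntervalIntegrable (fun θ : ℝ => ac' * ∑ m ∈ Finset.range (L+1),
      a m * Real.cos ((c m : ℝ) * θ)) volume 0 Real.pi :=
    (continuous_const.mul (hS c a (L+1))).intervalIntegrable _ _
  have iD : IntervalIntegrable (fun θ : ℝ => ∑ m ∈ Finset.range (L+1),
      ∑ m' ∈ Finset.range (K+1), (a m * b m') * (Real.cos ((c m : ℝ) * θ)
        * Real.cos ((d m' : ℝ) * θ))) volume 0 Real.pi :=
    idbl.intervalIntegrable _ _
  rw [intervalIntegral.integral_add (intervalIntegrable_const) (iT.add (iS.add iD)),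
    intervalIntegral.integral_add iT (iS.add iD),
    intervalIntegral.integral_add iS iD]
  have h1 : (∫ θ in (0:ℝ)..Real.pi, ac * ∑ m ∈ Finset.range (K+1),
      b m * Real.cos ((d m : ℝ) * θ)) = 0 := by
    rw [intervalIntegral.integral_const_mul,
      intervalIntegral.integral_finset_sum (f := fun m θ => b m * Real.cos ((d m : ℝ) * θ))
        (fun m _ => (continuous_const.mul (ccont (d m))).intervalIntegrable _ _)]
    have : ∑ m ∈ Finset.range (K+1), ∫ θ in (0:ℝ)..Real.pi, b m * Real.cos ((d m : ℝ) * θ) = 0 := by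
      refine Finset.sum_eq_zero fun m _ => ?_
      rw [intervalIntegral.integral_const_mul, trig0' (d m) (hd m).ne', mul_zero]
    rw [this, mul_zero]
  have h2 : (∫ θ in (0:ℝ)..Real.pi, ac' * ∑ m ∈ Finset.range (L+1),
      a m * Real.cos ((c m : ℝ) * θ)) = 0 := by
    rw [intervalIntegral.integral_const_mul,
      intervalIntegral.integral_finset_sum (f := fun m θ => a m * Real.cos ((c m : ℝ) * θ))
        (fun m _ => (continuous_const.mul (ccont (c m))).intervalIntegrable _ _)]
    have : ∑ m ∈ Finset.range (L+1), ∫ θ in (0:ℝ)..Real.pi, a m * Real.cos ((c m : ℝ) * θ) = 0 := by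
      refine Finset.sum_eq_zero fun m _ => ?_
      rw [intervalIntegral.integral_const_mul, trig0' (c m) (hc m).ne', mul_zero]
    rw [this, mul_zero]
  have h3 : (∫ θ in (0:ℝ)..Real.pi, ∑ m ∈ Finset.range (L+1), ∑ m' ∈ Finset.range (K+1),
        (a m * b m') * (Real.cos ((c m : ℝ) * θ) * Real.cos ((d m' : ℝ) * θ)))
      = (Real.pi / 2) * ∑ m ∈ Finset.range (L+1), ∑ m' ∈ Finset.range (K+1),
          (if c m = d m' then a m * b m' else 0) := by
    rw [intervalIntegral.integral_finset_sum (f := fun m θ => ∑ m' ∈ Finset.range (K+1),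
        (a m * b m') * (Real.cos ((c m : ℝ) * θ) * Real.cos ((d m' : ℝ) * θ)))
      (fun m _ => (continuous_finset_sum _ fun m' _ =>
        continuous_const.mul ((ccont (c m)).mul (ccont (d m')))).intervalIntegrable _ _)]
    have z3 : ∀ m ∈ Finset.range (L+1),
        (∫ θ in (0:ℝ)..Real.pi, ∑ m' ∈ Finset.range (K+1),
          (a m * b m') * (Real.cos ((c m : ℝ) * θ) * Real.cos ((d m' : ℝ) * θ)))
        = ∑ m' ∈ Finset.range (K+1), (Real.pi/2) * (if c m = d m' then a m * b m' else 0) := by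
      intro m _
      rw [intervalIntegral.integral_finset_sum
        (f := fun m' θ => (a m * b m') * (Real.cos ((c m : ℝ) * θ) * Real.cos ((d m' : ℝ) * θ)))
        (fun m' _ => (continuous_const.mul
          ((ccont (c m)).mul (ccont (d m')))).intervalIntegrable _ _)]
      refine Finset.sum_congr rfl fun m' _ => ?_
      rw [intervalIntegral.integral_const_mul, trigprod' (c m) (d m') (hc m) (hd m')]
      by_cases h : c m = d m' <;> simp [h] <;> ring
    rw [Finset.sum_congr rfl z3]
    simp only [← Finset.mul_sum]
  rw [h1, h2, h3, intervalIntegral.integral_const]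
  simp only [smul_eq_mul, sub_zero]
  ring

lemma deltasum (a : ℕ → ℝ) (L l : ℕ) :
    ∑ m ∈ Finset.range (L+1), ∑ m' ∈ Finset.range (L+1),
        (if m = m' + l then a m * a m' else 0)
      = ∑ m ∈ Finset.Icc l L, a m * a (m - l) := by
  rw [Finset.sum_comm]
  have inner : ∀ m' ∈ Finset.range (L+1),
      (∑ m ∈ Finset.range (L+1), if m = m' + l then a m * a m' else 0)
        = if m' + l ≤ L then a (m' + l) * a m' else 0 := by
    intro m' _
    rw [Finset.sum_ite_eq' (Finset.range (L+1)) (m' + l) (fun m => a m * a m')]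
    simp [Nat.lt_succ_iff]
  rw [Finset.sum_congr rfl inner, ← Finset.sum_filter]
  refine Finset.sum_nbij' (fun m' => m' + l) (fun m => m - l) ?_ ?_ ?_ ?_ ?_
  · intro x hx
    simp only [Finset.mem_filter, Finset.mem_range] at hx
    simp only [Finset.mem_Icc]
    omega
  · intro x hx
    simp only [Finset.mem_Icc] at hx
    simp only [Finset.mem_filter, Finset.mem_range]
    omega
  · intro x _; omega
  · intro x hx
    simp only [Finset.mem_Icc] at hx
    omega
  · intro x _
    simp

lemma sqsum (a : ℕ → ℝ) (L : ℕ) :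
    (∑ m ∈ Finset.range (L+1), a m) ^ 2
      = ∑ m ∈ Finset.range (L+1), a m ^ 2
        + 2 * ∑ l ∈ Finset.Icc 1 L, ∑ m ∈ Finset.Icc l L, a m * a (m - l) := by
  induction L with
  | zero => simp
  | succ L ih =>
    rw [Finset.sum_range_succ, Finset.sum_range_succ (f := fun m => a m ^ 2)]
    have split1 : ∑ l ∈ Finset.Icc 1 (L+1), ∑ m ∈ Finset.Icc l (L+1), a m * a (m - l)
        = (∑ l ∈ Finset.Icc 1 L, ∑ m ∈ Finset.Icc l (L+1), a m * a (m - l))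
          + ∑ m ∈ Finset.Icc (L+1) (L+1), a m * a (m - (L+1)) := by
      exact Finset.sum_Icc_succ_top (by omega) _
    have split2 : ∀ l ∈ Finset.Icc 1 L,
        (∑ m ∈ Finset.Icc l (L+1), a m * a (m - l))
          = (∑ m ∈ Finset.Icc l L, a m * a (m - l)) + a (L+1) * a (L+1-l) := by
      intro l hl
      simp only [Finset.mem_Icc] at hl
      exact Finset.sum_Icc_succ_top (by omega) _
    have refl1 : ∑ l ∈ Finset.Icc 1 (L+1), a (L+1) * a (L+1-l)
        = a (L+1) * ∑ j ∈ Finset.range (L+1), a j := by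
      rw [← Finset.mul_sum]
      congr 1
      refine Finset.sum_nbij' (fun l => L + 1 - l) (fun j => L + 1 - j) ?_ ?_ ?_ ?_ ?_
      · intro x hx; simp only [Finset.mem_Icc] at hx; simp only [Finset.mem_range]; omega
      · intro x hx; simp only [Finset.mem_range] at hx; simp only [Finset.mem_Icc]; omega
      · intro x hx; simp only [Finset.mem_Icc] at hx; omega
      · intro x hx; simp only [Finset.mem_range] at hx; omega
      · intro x _; rfl
    have lastIcc : Finset.Icc 1 (L+1) = insert (L+1) (Finset.Icc 1 L) := by
      ext x
      simp only [Finset.mem_Icc, Finset.mem_insert]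
      omega
    rw [split1, Finset.sum_congr rfl split2, Finset.sum_add_distrib, Finset.Icc_self,
      Finset.sum_singleton]
    have refl2 : (∑ l ∈ Finset.Icc 1 L, a (L+1) * a (L+1-l)) + a (L+1) * a 0
        = a (L+1) * ∑ j ∈ Finset.range (L+1), a j := by
      rw [lastIcc, Finset.sum_insert (by simp)] at refl1
      simp only [Nat.sub_self] at refl1
      linarith [refl1]
    simp only [Nat.sub_self]
    linear_combination ih - 2 * refl2

lemma intB (ac : ℝ) (a : ℕ → ℝ) (c : ℕ → ℕ) (hc : ∀ m, 0 < c m) (L : ℕ) :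
    ∫ θ in (0:ℝ)..Real.pi,
        (ac + ∑ m ∈ Finset.range (L+1), a m * Real.cos ((c m : ℝ) * θ)) = ac * Real.pi := by
  have ccont : ∀ (e : ℕ), Continuous (fun θ : ℝ => Real.cos ((e : ℝ) * θ)) := fun e =>
    Real.continuous_cos.comp (continuous_const.mul continuous_id)
  have hS : Continuous (fun θ : ℝ => ∑ m ∈ Finset.range (L+1), a m * Real.cos ((c m : ℝ) * θ)) :=
    continuous_finset_sum _ fun m _ => continuous_const.mul (ccont (c m))
  rw [intervalIntegral.integral_add intervalIntegrable_const (hS.intervalIntegrable _ _),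
    intervalIntegral.integral_finset_sum (f := fun m θ => a m * Real.cos ((c m : ℝ) * θ))
      (fun m _ => (continuous_const.mul (ccont (c m))).intervalIntegrable _ _)]
  have z : ∑ m ∈ Finset.range (L+1), ∫ θ in (0:ℝ)..Real.pi, a m * Real.cos ((c m : ℝ) * θ) = 0 := by
    refine Finset.sum_eq_zero fun m _ => ?_
    rw [intervalIntegral.integral_const_mul, trig0' (c m) (hc m).ne', mul_zero]
  rw [z, intervalIntegral.integral_const]
  simp [mul_comm]

/-- superefficiency for `B = a_c + Σ_{m=0}^L a_m T_{p^m}`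
when `Σ a_m = 0`: the `O(1/N)` term vanishes and `σ(N) = O(1/N²)`. -/
theorem chebyshev_superefficiency
    (L : ℕ) (ac : ℝ) (a : ℕ → ℝ) (p : ℕ) (hp : 2 ≤ p)
    (B : ℝ → ℝ)
    (hB : ∀ x, B x = ac + ∑ m ∈ range (L + 1), a m * (T ℝ (p ^ m : ℕ)).eval x)
    (σ : ℕ → ℝ)
    (hσ : ∀ N : ℕ, σ N =
      (1 / (N : ℝ)) *
        ((∫ x in Set.Icc (-1 : ℝ) 1, B x ^ 2 * (1 / (Real.pi * Real.sqrt (1 - x ^ 2))))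
          - (∫ x in Set.Icc (-1 : ℝ) 1, B x * (1 / (Real.pi * Real.sqrt (1 - x ^ 2)))) ^ 2)
      + (2 / (N : ℝ) ^ 2) * ∑ l ∈ Icc 1 N, ((N : ℝ) - (l : ℝ)) *
          ((∫ x in Set.Icc (-1 : ℝ) 1,
              B x * B ((T ℝ (p ^ l : ℕ)).eval x) * (1 / (Real.pi * Real.sqrt (1 - x ^ 2))))
            - (∫ x in Set.Icc (-1 : ℝ) 1, B x * (1 / (Real.pi * Real.sqrt (1 - x ^ 2)))) ^ 2))
    (hsum : ∑ m ∈ range (L + 1), a m = 0) :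
    (∀ N : ℕ, L ≤ N → 1 ≤ N →
      σ N = -(1 / (N : ℝ) ^ 2) *
          ∑ l ∈ Icc 1 L, ∑ m ∈ Icc l L, (l : ℝ) * a m * a (m - l))
    ∧ (fun N : ℕ => σ N) =O[Filter.atTop] (fun N : ℕ => 1 / (N : ℝ) ^ 2) := by
  have hπ : Real.pi ≠ 0 := Real.pi_ne_zero
  have hppos : 0 < p := by omega
  have hc : ∀ m : ℕ, 0 < p ^ m := fun m => pow_pos hppos m
  have pinj : ∀ {m n : ℕ}, p ^ m = p ^ n → m = n := fun h => Nat.pow_right_injective hp h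
  -- pointwise cosine forms
  have hTc : ∀ (n : ℕ) (φ : ℝ), (T ℝ (n : ℤ)).eval (Real.cos φ) = Real.cos ((n : ℝ) * φ) := by
    intro n φ
    rw [Polynomial.Chebyshev.T_real_cos]
    norm_num
  have hBcos : ∀ θ : ℝ, B (Real.cos θ)
      = ac + ∑ m ∈ range (L + 1), a m * Real.cos (((p ^ m : ℕ) : ℝ) * θ) := by
    intro θ
    rw [hB]
    congr 1
    exact Finset.sum_congr rfl fun m _ => by rw [hTc (p ^ m) θ]
  have hBTcos : ∀ (l : ℕ) (θ : ℝ), B ((T ℝ ((p ^ l : ℕ) : ℤ)).eval (Real.cos θ))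
      = ac + ∑ m ∈ range (L + 1), a m * Real.cos (((p ^ (m + l) : ℕ) : ℝ) * θ) := by
    intro l θ
    rw [hTc (p ^ l) θ, hB]
    congr 1
    refine Finset.sum_congr rfl fun m _ => ?_
    rw [hTc (p ^ m) (((p ^ l : ℕ) : ℝ) * θ)]
    congr 1
    push_cast [pow_add]
    ring
  have hBcont : Continuous B := by
    have : B = fun x => ac + ∑ m ∈ range (L + 1), a m * (T ℝ (p ^ m : ℕ)).eval x := funext hB
    rw [this]
    exact continuous_const.add (continuous_finset_sum _ fun m _ =>
      continuous_const.mul (Polynomial.continuous _))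
  -- the three integrals
  have I1 : (∫ x in Set.Icc (-1 : ℝ) 1, B x * (1 / (Real.pi * Real.sqrt (1 - x ^ 2)))) = ac := by
    rw [cov B hBcont, intervalIntegral.integral_congr (fun θ _ => hBcos θ),
      intB ac a (fun m => p ^ m) hc L]
    field_simp
  have diag : ∑ m ∈ range (L+1), ∑ m' ∈ range (L+1),
      (if p ^ m = p ^ m' then a m * a m' else 0) = ∑ m ∈ range (L+1), a m ^ 2 := by
    refine Finset.sum_congr rfl fun m hm => ?_
    have : ∀ m' ∈ range (L+1), (if p ^ m = p ^ m' then a m * a m' else 0)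
        = if m' = m then a m * a m' else 0 := by
      intro m' _
      by_cases h : m' = m
      · simp [h]
      · have h2 : p ^ m ≠ p ^ m' := fun hh => h (pinj hh).symm
        simp [h, h2]
    rw [Finset.sum_congr rfl this, Finset.sum_ite_eq' (range (L+1)) m (fun m' => a m * a m')]
    rw [Finset.mem_range] at hm
    simp [hm, sq]
  have I2 : (∫ x in Set.Icc (-1 : ℝ) 1, B x ^ 2 * (1 / (Real.pi * Real.sqrt (1 - x ^ 2))))
      = ac ^ 2 + (1/2) * ∑ m ∈ range (L+1), a m ^ 2 := by
    rw [cov (fun x => B x ^ 2) (hBcont.pow 2)]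
    have : ∫ θ in (0:ℝ)..Real.pi, B (Real.cos θ) ^ 2
        = ∫ θ in (0:ℝ)..Real.pi,
          (ac + ∑ m ∈ range (L + 1), a m * Real.cos (((p ^ m : ℕ) : ℝ) * θ))
          * (ac + ∑ m ∈ range (L + 1), a m * Real.cos (((p ^ m : ℕ) : ℝ) * θ)) := by
      refine intervalIntegral.integral_congr (fun θ _ => ?_)
      rw [hBcos θ]; ring
    rw [this, intBB ac ac a a (fun m => p ^ m) (fun m => p ^ m) hc hc L L, diag]
    field_simp
  have I3 : ∀ l : ℕ, (∫ x in Set.Icc (-1 : ℝ) 1,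
        B x * B ((T ℝ (p ^ l : ℕ)).eval x) * (1 / (Real.pi * Real.sqrt (1 - x ^ 2))))
      = ac ^ 2 + (1/2) * ∑ m ∈ Icc l L, a m * a (m - l) := by
    intro l
    rw [cov (fun x => B x * B ((T ℝ (p ^ l : ℕ)).eval x))
      (hBcont.mul (hBcont.comp (Polynomial.continuous _)))]
    have : ∫ θ in (0:ℝ)..Real.pi, B (Real.cos θ) * B ((T ℝ (p ^ l : ℕ)).eval (Real.cos θ))
        = ∫ θ in (0:ℝ)..Real.pi,
          (ac + ∑ m ∈ range (L + 1), a m * Real.cos (((p ^ m : ℕ) : ℝ) * θ))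
          * (ac + ∑ m ∈ range (L + 1), a m * Real.cos (((p ^ (m + l) : ℕ) : ℝ) * θ)) := by
      refine intervalIntegral.integral_congr (fun θ _ => ?_)
      rw [hBcos θ, hBTcos l θ]
    rw [this, intBB ac ac a a (fun m => p ^ m) (fun m => p ^ (m + l)) hc (fun m => hc (m+l)) L L]
    have conv : ∑ m ∈ range (L+1), ∑ m' ∈ range (L+1),
        (if p ^ m = p ^ (m' + l) then a m * a m' else 0)
        = ∑ m ∈ Icc l L, a m * a (m - l) := by
      rw [← deltasum a L l]
      refine Finset.sum_congr rfl fun m _ => Finset.sum_congr rfl fun m' _ => ?_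
      by_cases h : m = m' + l
      · simp [h]
      · have h2 : p ^ m ≠ p ^ (m' + l) := fun hh => h (pinj hh)
        simp [h, h2]
    rw [conv]
    field_simp
  -- main formula
  have main : ∀ N : ℕ, L ≤ N → 1 ≤ N →
      σ N = -(1 / (N : ℝ) ^ 2) *
        ∑ l ∈ Icc 1 L, ∑ m ∈ Icc l L, (l : ℝ) * a m * a (m - l) := by
    intro N hLN hN1
    have hNne : (N : ℝ) ≠ 0 := Nat.cast_ne_zero.mpr (by omega)
    set S : ℕ → ℝ := fun l => ∑ m ∈ Icc l L, a m * a (m - l) with hS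
    have hσN := hσ N
    rw [I1, I2] at hσN
    have hterm : ∀ l ∈ Icc 1 N, ((N : ℝ) - (l : ℝ)) *
        ((∫ x in Set.Icc (-1 : ℝ) 1,
            B x * B ((T ℝ (p ^ l : ℕ)).eval x) * (1 / (Real.pi * Real.sqrt (1 - x ^ 2))))
          - ac ^ 2)
        = ((N : ℝ) - (l : ℝ)) * ((1/2) * S l) := by
      intro l _
      rw [I3 l]
      ring
    rw [Finset.sum_congr rfl hterm] at hσN
    have hsub : ∑ l ∈ Icc 1 N, ((N : ℝ) - (l : ℝ)) * ((1/2) * S l)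
        = ∑ l ∈ Icc 1 L, ((N : ℝ) - (l : ℝ)) * ((1/2) * S l) := by
      symm
      refine Finset.sum_subset (Finset.Icc_subset_Icc_right hLN) ?_
      intro l hl hnl
      simp only [Finset.mem_Icc] at hl hnl
      have : Finset.Icc l L = ∅ := Finset.Icc_eq_empty (by omega)
      simp [hS, this]
    rw [hsub] at hσN
    have expand : ∑ l ∈ Icc 1 L, ((N : ℝ) - (l : ℝ)) * ((1/2) * S l)
        = (N : ℝ) * (∑ l ∈ Icc 1 L, S l) / 2 - (∑ l ∈ Icc 1 L, (l : ℝ) * S l) / 2 := by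
      have h0 : ∀ l ∈ Icc 1 L, ((N : ℝ) - (l : ℝ)) * ((1/2) * S l)
          = (N : ℝ) * S l / 2 - (l : ℝ) * S l / 2 := fun l _ => by ring
      rw [Finset.sum_congr rfl h0, Finset.sum_sub_distrib, ← Finset.sum_div, ← Finset.sum_div,
        ← Finset.mul_sum]
    rw [expand] at hσN
    have hSsum : ∑ l ∈ Icc 1 L, S l = -(∑ m ∈ range (L+1), a m ^ 2) / 2 := by
      have := sqsum a L
      rw [hsum] at this
      simp only [ne_eq, OfNat.ofNat_ne_zero, not_false_eq_true, zero_pow] at this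
      linarith
    have hT : ∑ l ∈ Icc 1 L, ∑ m ∈ Icc l L, (l : ℝ) * a m * a (m - l)
        = ∑ l ∈ Icc 1 L, (l : ℝ) * S l := by
      refine Finset.sum_congr rfl fun l _ => ?_
      rw [hS, Finset.mul_sum]
      exact Finset.sum_congr rfl fun m _ => by ring
    rw [hσN, hT, hSsum]
    field_simp
    ring
  refine ⟨main, ?_⟩
  rw [Asymptotics.isBigO_iff]
  refine ⟨|∑ l ∈ Icc 1 L, ∑ m ∈ Icc l L, (l : ℝ) * a m * a (m - l)|, ?_⟩
  rw [Filter.eventually_atTop]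
  refine ⟨max L 1, fun N hN => ?_⟩
  rw [main N (le_trans (le_max_left _ _) hN) (le_trans (le_max_right _ _) hN)]
  rw [norm_mul, norm_neg]
  rw [mul_comm, Real.norm_eq_abs (∑ l ∈ Icc 1 L, ∑ m ∈ Icc l L, (l : ℝ) * a m * a (m - l))]
end

section
/- Let B(x) = a_c + Σ_{m=0}^{L} a_m T_{p^m}(x) with p ≥ 2, and let p' ≥ 2 be an integer such that p^m · p'^l ≠ p^{m'} for all 0 ≤ m, m' ≤ L and l ≥ 1 (e.g., p, p' distinct primes). Then ⟨B(x)·B(T_{p'^l}(x))⟩ = a_c² = ⟨B⟩² for every l ≥ 1, so the p'-th Chebyshev map produces zero dynamical correlation. -/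
open Polynomial Polynomial.Chebyshev MeasureTheory Finset

namespace ChebAux

noncomputable def w (x : ℝ) : ℝ := 1 / (Real.pi * Real.sqrt (1 - x ^ 2))

noncomputable def g (n : ℤ) (x : ℝ) : ℝ := (T ℝ n).eval x * w x

lemma ioo_eq_cos_image : Set.Ioo (-1:ℝ) 1 = Real.cos '' Set.Ioo 0 Real.pi := by
  ext y
  constructor
  · rintro ⟨h1, h2⟩
    refine ⟨Real.arccos y, ⟨Real.arccos_pos.2 h2, ?_⟩, Real.cos_arccos h1.le h2.le⟩
    rcases lt_or_eq_of_le (Real.arccos_le_pi y) with h | h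
    · exact h
    · exact absurd (Real.arccos_eq_pi.1 h) (by linarith)
  · rintro ⟨θ, ⟨h1, h2⟩, rfl⟩
    constructor
    · calc (-1:ℝ) = Real.cos Real.pi := (Real.cos_pi).symm
        _ < Real.cos θ := Real.strictAntiOn_cos ⟨h1.le, h2.le⟩ ⟨Real.pi_pos.le, le_refl _⟩ h2
    · calc Real.cos θ < Real.cos 0 :=
          Real.strictAntiOn_cos ⟨le_refl _, Real.pi_pos.le⟩ ⟨h1.le, h2.le⟩ h1
        _ = 1 := Real.cos_zero

lemma cos_deriv : ∀ θ ∈ Set.Ioo (0:ℝ) Real.pi,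
    HasDerivWithinAt Real.cos (-Real.sin θ) (Set.Ioo 0 Real.pi) θ :=
  fun θ _ => (Real.hasDerivAt_cos θ).hasDerivWithinAt

lemma cos_injOn : Set.InjOn Real.cos (Set.Ioo 0 Real.pi) :=
  Real.injOn_cos.mono Set.Ioo_subset_Icc_self

lemma eqOn_cov (n : ℤ) : ∀ θ ∈ Set.Ioo (0:ℝ) Real.pi,
    |(-Real.sin θ)| • (g n (Real.cos θ)) = Real.cos (n * θ) / Real.pi := by
  intro θ ⟨h1, h2⟩
  have hs : 0 < Real.sin θ := Real.sin_pos_of_pos_of_lt_pi h1 h2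
  have h1c : 1 - Real.cos θ ^ 2 = Real.sin θ ^ 2 := by
    have := Real.sin_sq_add_cos_sq θ; linarith
  rw [g, w, T_real_cos, h1c, Real.sqrt_sq hs.le, abs_neg, abs_of_pos hs, smul_eq_mul]
  have hπ : Real.pi ≠ 0 := Real.pi_ne_zero
  field_simp

lemma core (n : ℤ) :
    IntegrableOn (g n) (Set.Ioo (-1:ℝ) 1) ∧
    ∫ x in Set.Ioo (-1:ℝ) 1, g n x = if n = 0 then 1 else 0 := by
  have hmeas : MeasurableSet (Set.Ioo (0:ℝ) Real.pi) := measurableSet_Ioo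
  have hint : IntegrableOn (fun θ => Real.cos (n * θ) / Real.pi) (Set.Ioo (0:ℝ) Real.pi) :=
    ((Real.continuous_cos.comp (continuous_const.mul continuous_id)).div_const
      Real.pi).integrableOn_Icc |>.mono_set Set.Ioo_subset_Icc_self
  constructor
  · rw [ioo_eq_cos_image,
      integrableOn_image_iff_integrableOn_abs_deriv_smul hmeas cos_deriv cos_injOn]
    exact (integrableOn_congr_fun (eqOn_cov n) hmeas).2 hint
  · rw [ioo_eq_cos_image,
      integral_image_eq_integral_abs_deriv_smul hmeas cos_deriv cos_injOn,
      setIntegral_congr_fun hmeas (eqOn_cov n),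
      ← integral_Ioc_eq_integral_Ioo, ← intervalIntegral.integral_of_le Real.pi_pos.le]
    rcases eq_or_ne n 0 with rfl | hn
    · simp [Real.pi_ne_zero]
    · have h1 : ∫ θ in (0:ℝ)..Real.pi, Real.cos (n * θ) / Real.pi
          = (∫ θ in (0:ℝ)..Real.pi, Real.cos (n * θ)) / Real.pi := by
        rw [intervalIntegral.integral_div]
      rw [h1, if_neg hn]
      have hc : (n:ℝ) ≠ 0 := Int.cast_ne_zero.2 hn
      rw [intervalIntegral.integral_comp_mul_left (c := (n:ℝ)) Real.cos hc]
      simp [Real.sin_int_mul_pi]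

lemma gInt (n : ℤ) : IntegrableOn (g n) (Set.Icc (-1:ℝ) 1) := by
  rw [integrableOn_Icc_iff_integrableOn_Ioo]
  exact (core n).1

lemma gVal (n : ℤ) : ∫ x in Set.Icc (-1:ℝ) 1, g n x = if n = 0 then 1 else 0 := by
  rw [integral_Icc_eq_integral_Ioc, integral_Ioc_eq_integral_Ioo]
  exact (core n).2

lemma gVal0 : ∫ x in Set.Icc (-1:ℝ) 1, g 0 x = 1 := by rw [gVal]; simp

lemma gValne (n : ℤ) (hn : n ≠ 0) : ∫ x in Set.Icc (-1:ℝ) 1, g n x = 0 := by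
  rw [gVal, if_neg hn]

lemma hTT (x : ℝ) (a b : ℤ) :
    (T ℝ a).eval x * (T ℝ b).eval x = ((T ℝ (a+b)).eval x + (T ℝ (a-b)).eval x) / 2 := by
  have h := congrArg (Polynomial.eval x) (T_mul_T ℝ a b)
  simp only [Polynomial.eval_mul, Polynomial.eval_add, Polynomial.eval_ofNat] at h
  linarith

end ChebAux

open ChebAux

/-- a mismatched Chebyshev map `T_{p'}` produces zero dynamical
correlation on `B = a_c + Σ_{m=0}^L a_m T_{p^m}`. -/
theorem chebyshev_mismatched_map_no_correlation
    (L : ℕ) (ac : ℝ) (a : ℕ → ℝ) (p p' : ℕ) (hp : 2 ≤ p) (hp' : 2 ≤ p')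
    (hmismatch : ∀ m m' l : ℕ, m ≤ L → m' ≤ L → 1 ≤ l → p ^ m * p' ^ l ≠ p ^ m')
    (B : ℝ → ℝ)
    (hB : ∀ x, B x = ac + ∑ m ∈ range (L + 1), a m * (T ℝ (p ^ m : ℕ)).eval x)
    (l : ℕ) (hl : 1 ≤ l) :
    (∫ x in Set.Icc (-1 : ℝ) 1,
        B x * B ((T ℝ (p' ^ l : ℕ)).eval x) * (1 / (Real.pi * Real.sqrt (1 - x ^ 2)))
      = ac ^ 2)
    ∧ (∫ x in Set.Icc (-1 : ℝ) 1, B x * (1 / (Real.pi * Real.sqrt (1 - x ^ 2)))) ^ 2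
        = ac ^ 2 := by
  have hp0 : p ≠ 0 := by omega
  have hp'0 : p' ≠ 0 := by omega
  set α : ℕ → ℤ := fun m => ((p ^ m : ℕ) : ℤ) with hαdef
  set β : ℕ → ℤ := fun m => ((p ^ m * p' ^ l : ℕ) : ℤ) with hβdef
  have hαpos : ∀ m, 0 < α m := fun m => by
    simp only [hαdef]; exact_mod_cast Nat.pos_of_ne_zero (pow_ne_zero _ hp0)
  have hβpos : ∀ m, 0 < β m := fun m => by
    simp only [hβdef]
    exact_mod_cast Nat.pos_of_ne_zero (Nat.mul_ne_zero (pow_ne_zero _ hp0) (pow_ne_zero _ hp'0))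
  have hαne : ∀ m, α m ≠ 0 := fun m => (hαpos m).ne'
  have hβne : ∀ m, β m ≠ 0 := fun m => (hβpos m).ne'
  have hsumne : ∀ m m', α m + β m' ≠ 0 := fun m m' => by positivity
  have hdiffne : ∀ m ∈ range (L + 1), ∀ m' ∈ range (L + 1), α m - β m' ≠ 0 := by
    intro m hm m' hm' h
    have h2 : α m = β m' := by linarith [sub_eq_zero.1 h]
    simp only [hαdef, hβdef] at h2
    have h3 : p ^ m = p ^ m' * p' ^ l := by exact_mod_cast h2
    simp only [Finset.mem_range] at hm hm'
    exact hmismatch m' m l (by omega) (by omega) hl h3.symm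
  -- second conjunct's integral
  have hBw : ∀ x : ℝ, B x * (1 / (Real.pi * Real.sqrt (1 - x ^ 2)))
      = ac * g 0 x + ∑ m ∈ range (L + 1), a m * g (α m) x := by
    intro x
    rw [hB x]
    simp only [g, w, T_zero, Polynomial.eval_one]
    rw [add_mul, Finset.sum_mul]
    congr 1
    · ring
    · exact Finset.sum_congr rfl fun m _ => by ring
  have h2 : (∫ x in Set.Icc (-1 : ℝ) 1, B x * (1 / (Real.pi * Real.sqrt (1 - x ^ 2)))) = ac := by
    rw [setIntegral_congr_fun measurableSet_Icc (fun x _ => hBw x),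
      integral_add ((gInt 0).const_mul ac)
        (integrable_finset_sum _ fun m _ => (gInt (α m)).const_mul _),
      integral_finset_sum _ (fun m _ => (gInt (α m)).const_mul _)]
    simp only [integral_const_mul, gVal0, mul_one]
    rw [Finset.sum_eq_zero fun m _ => by rw [gValne _ (hαne m), mul_zero]]
    ring
  refine ⟨?_, by rw [h2]⟩
  -- first conjunct
  have key : ∀ x : ℝ, B x * B ((T ℝ (p' ^ l : ℕ)).eval x) * (1 / (Real.pi * Real.sqrt (1 - x ^ 2)))
      = ac ^ 2 * g 0 x
        + (∑ m' ∈ range (L + 1), (ac * a m') * g (β m') x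
        + (∑ m ∈ range (L + 1), (ac * a m) * g (α m) x
        + ∑ m ∈ range (L + 1), ∑ m' ∈ range (L + 1),
            (a m * a m' / 2) * (g (α m + β m') x + g (α m - β m') x))) := by
    intro x
    rw [hB x, hB ((T ℝ (p' ^ l : ℕ)).eval x)]
    have hcomp : ∀ m : ℕ, (T ℝ (p ^ m : ℕ)).eval ((T ℝ (p' ^ l : ℕ)).eval x)
        = (T ℝ (β m)).eval x := by
      intro m
      rw [show β m = ((p ^ m : ℕ) : ℤ) * ((p' ^ l : ℕ) : ℤ) by simp [hβdef],
        T_mul, Polynomial.eval_comp]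
    simp only [hcomp]
    set S1 := ∑ m ∈ range (L + 1), a m * (T ℝ (α m)).eval x with hS1
    set S2 := ∑ m' ∈ range (L + 1), a m' * (T ℝ (β m')).eval x with hS2
    have expand : (ac + S1) * (ac + S2) * (1 / (Real.pi * Real.sqrt (1 - x ^ 2)))
        = ac ^ 2 * w x + (S2 * (ac * w x) + (S1 * (ac * w x) + S1 * S2 * w x)) := by
      rw [w]; ring
    rw [expand]
    congr 1
    · simp [g, T_zero]
    congr 1
    · rw [hS2, Finset.sum_mul]
      exact Finset.sum_congr rfl fun m' _ => by simp only [g]; ring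
    congr 1
    · rw [hS1, Finset.sum_mul]
      exact Finset.sum_congr rfl fun m _ => by simp only [g]; ring
    · rw [hS1, hS2, Finset.sum_mul_sum, Finset.sum_mul]
      refine Finset.sum_congr rfl fun m _ => ?_
      rw [Finset.sum_mul]
      refine Finset.sum_congr rfl fun m' _ => ?_
      have h := hTT x (α m) (β m')
      simp only [g]
      linear_combination (a m * a m' * w x) * h
  rw [setIntegral_congr_fun measurableSet_Icc (fun x _ => key x)]
  have i0 : IntegrableOn (fun x => ac ^ 2 * g 0 x) (Set.Icc (-1:ℝ) 1) :=
    (gInt 0).const_mul _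
  have iS2 : IntegrableOn (fun x => ∑ m' ∈ range (L + 1), (ac * a m') * g (β m') x)
      (Set.Icc (-1:ℝ) 1) := integrable_finset_sum _ fun m _ => (gInt (β m)).const_mul _
  have iS1 : IntegrableOn (fun x => ∑ m ∈ range (L + 1), (ac * a m) * g (α m) x)
      (Set.Icc (-1:ℝ) 1) := integrable_finset_sum _ fun m _ => (gInt (α m)).const_mul _
  have iDD : IntegrableOn (fun x => ∑ m ∈ range (L + 1), ∑ m' ∈ range (L + 1),
      (a m * a m' / 2) * (g (α m + β m') x + g (α m - β m') x)) (Set.Icc (-1:ℝ) 1) :=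
    integrable_finset_sum _ fun m _ => integrable_finset_sum _ fun m' _ =>
      (((gInt (α m + β m')).add (gInt (α m - β m'))).const_mul _)
  have iR1 : IntegrableOn (fun x => (∑ m ∈ range (L + 1), (ac * a m) * g (α m) x)
      + ∑ m ∈ range (L + 1), ∑ m' ∈ range (L + 1),
          (a m * a m' / 2) * (g (α m + β m') x + g (α m - β m') x)) (Set.Icc (-1:ℝ) 1) :=
    iS1.add iDD
  have iR2 : IntegrableOn (fun x => (∑ m' ∈ range (L + 1), (ac * a m') * g (β m') x)
      + ((∑ m ∈ range (L + 1), (ac * a m) * g (α m) x)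
      + ∑ m ∈ range (L + 1), ∑ m' ∈ range (L + 1),
          (a m * a m' / 2) * (g (α m + β m') x + g (α m - β m') x))) (Set.Icc (-1:ℝ) 1) :=
    iS2.add iR1
  have iIn : ∀ m m' : ℕ, IntegrableOn
      (fun x => (a m * a m' / 2) * (g (α m + β m') x + g (α m - β m') x))
      (Set.Icc (-1:ℝ) 1) :=
    fun m m' => ((gInt (α m + β m')).add (gInt (α m - β m'))).const_mul _
  have iOut : ∀ m : ℕ, IntegrableOn
      (fun x => ∑ m' ∈ range (L + 1), (a m * a m' / 2) * (g (α m + β m') x + g (α m - β m') x))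
      (Set.Icc (-1:ℝ) 1) :=
    fun m => integrable_finset_sum _ fun m' _ => iIn m m'
  rw [integral_add i0 iR2, integral_add iS2 iR1, integral_add iS1 iDD,
    integral_finset_sum _ (fun m _ => (gInt (β m)).const_mul _),
    integral_finset_sum _ (fun m _ => (gInt (α m)).const_mul _),
    integral_finset_sum _ (fun m _ => iOut m)]
  simp only [integral_const_mul, gVal0, mul_one]
  rw [Finset.sum_eq_zero fun m _ => by rw [gValne _ (hβne m), mul_zero],
    Finset.sum_eq_zero fun m _ => by rw [gValne _ (hαne m), mul_zero],
    Finset.sum_eq_zero]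
  · ring
  · intro m hm
    rw [integral_finset_sum _ (fun m' _ => iIn m m')]
    refine Finset.sum_eq_zero fun m' hm' => ?_
    rw [integral_const_mul, integral_add (gInt _) (gInt _), gValne _ (hsumne m m'),
      gValne _ (hdiffne m hm m' hm'), add_zero, mul_zero]
end

section
/- For B(x) = T_1(x) − T_2(x) = x − (2x² − 1) and the dynamics X ↦ T_2(X), the expected squared error satisfies σ(N) = 1/N² exactly, where σ(N) = (1/N)(⟨B²⟩−⟨B⟩²) + (2/N²)Σ_{l=1}^{N}(N−l)(⟨B·(B∘T_{2^l})⟩−⟨B⟩²), averages with respect to dx/(π√(1−x²)) on [−1,1], N ≥ 1. -/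
open Polynomial Polynomial.Chebyshev MeasureTheory Finset

noncomputable def wCheb (x : ℝ) : ℝ := 1 / (Real.pi * Real.sqrt (1 - x ^ 2))

lemma wCheb_def (x : ℝ) : 1 / (Real.pi * Real.sqrt (1 - x ^ 2)) = wCheb x := rfl

lemma wCheb_nonneg (x : ℝ) : 0 ≤ wCheb x := by
  unfold wCheb; positivity

lemma wCheb_measurable : Measurable wCheb := by
  unfold wCheb
  have : Continuous fun x : ℝ => Real.pi * Real.sqrt (1 - x ^ 2) := by
    continuity
  simp only [one_div]
  exact this.measurable.inv

lemma integrableOn_wCheb : IntegrableOn wCheb (Set.Icc (-1 : ℝ) 1) := by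
  have h0 : IntegrableOn (fun x : ℝ => 1 / Real.sqrt (1 - x ^ 2)) (Set.Ioc (-1 : ℝ) 1) := by
    apply intervalIntegral.integrableOn_deriv_of_nonneg Real.continuous_arcsin.continuousOn
    · intro x hx
      exact Real.hasDerivAt_arcsin (ne_of_gt hx.1) (ne_of_lt hx.2)
    · intro x hx; positivity
  rw [integrableOn_Icc_iff_integrableOn_Ioc]
  have h1 := h0.const_mul (1 / Real.pi)
  have h2 : wCheb = fun x => 1 / Real.pi * (1 / Real.sqrt (1 - x ^ 2)) := by
    funext x
    unfold wCheb
    rw [div_mul_div_comm, one_mul]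
  rw [h2]
  exact h1

lemma integrableOn_mul_wCheb {f : ℝ → ℝ} (hf : Continuous f) :
    IntegrableOn (fun x => f x * wCheb x) (Set.Icc (-1 : ℝ) 1) := by
  obtain ⟨C, hC⟩ := isCompact_Icc.exists_bound_of_continuousOn (hf.continuousOn :
    ContinuousOn f (Set.Icc (-1 : ℝ) 1))
  apply Integrable.mono' (integrableOn_wCheb.const_mul C)
    ((hf.measurable.mul wCheb_measurable).aestronglyMeasurable)
  rw [MeasureTheory.ae_restrict_iff' measurableSet_Icc]
  filter_upwards with x hx
  have h1 : ‖f x * wCheb x‖ = ‖f x‖ * wCheb x := by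
    rw [norm_mul, Real.norm_of_nonneg (wCheb_nonneg x)]
  rw [Pi.mul_apply, h1]
  exact mul_le_mul_of_nonneg_right (hC x hx) (wCheb_nonneg x)

lemma evalT_mul (a b : ℤ) (x : ℝ) :
    (T ℝ a).eval x * (T ℝ b).eval x
      = ((T ℝ (a + b)).eval x + (T ℝ (a - b)).eval x) / 2 := by
  have h := congrArg (Polynomial.eval x) (T_mul_T ℝ a b)
  simp only [Polynomial.eval_mul, Polynomial.eval_add, Polynomial.eval_ofNat] at h
  linarith

lemma intT_eq (n : ℤ) (hn : 0 ≤ n) :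
    ∫ x in Set.Icc (-1 : ℝ) 1, (T ℝ n).eval x * wCheb x = if n = 0 then 1 else 0 := by
  have hle : (-1 : ℝ) ≤ 1 := by norm_num
  have hIccInt : IntegrableOn (fun x => (T ℝ n).eval x * wCheb x) (Set.Icc (-1 : ℝ) 1) :=
    integrableOn_mul_wCheb (T ℝ n).continuous
  have hInt : IntervalIntegrable (fun x => (T ℝ n).eval x * wCheb x) volume (-1) 1 := by
    rw [intervalIntegrable_iff_integrableOn_Ioc_of_le hle]
    exact hIccInt.mono_set Set.Ioc_subset_Icc_self
  rw [MeasureTheory.integral_Icc_eq_integral_Ioc, ← intervalIntegral.integral_of_le hle]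
  rcases eq_or_lt_of_le hn with h0 | hpos
  · have hF : ∀ x ∈ Set.Ioo (-1 : ℝ) 1,
        HasDerivAt (fun y => Real.arcsin y / Real.pi) ((T ℝ n).eval x * wCheb x) x := by
      intro x hx
      have h := (Real.hasDerivAt_arcsin (ne_of_gt hx.1) (ne_of_lt hx.2)).div_const Real.pi
      refine h.congr_deriv (Eq.symm ?_)
      rw [← h0]
      simp only [T_zero, Polynomial.eval_one, one_mul, wCheb]
      rw [div_div, mul_comm]
    rw [intervalIntegral.integral_eq_sub_of_hasDerivAt_of_le hle
      ((Real.continuous_arcsin.div_const Real.pi).continuousOn) hF hInt]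
    rw [Real.arcsin_one, Real.arcsin_neg_one, if_pos h0.symm]
    field_simp
    ring
  · have hn0 : (n : ℝ) ≠ 0 := Int.cast_ne_zero.mpr (by omega)
    set F : ℝ → ℝ := fun y => -Real.sin ((n : ℝ) * Real.arccos y) / ((n : ℝ) * Real.pi) with hFdef
    have hF : ∀ x ∈ Set.Ioo (-1 : ℝ) 1, HasDerivAt F ((T ℝ n).eval x * wCheb x) x := by
      intro x hx
      have hs : (0 : ℝ) < Real.sqrt (1 - x ^ 2) :=
        Real.sqrt_pos.mpr (by nlinarith [hx.1, hx.2])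
      have h1 : HasDerivAt (fun y => (n : ℝ) * Real.arccos y)
          ((n : ℝ) * -(1 / Real.sqrt (1 - x ^ 2))) x :=
        (Real.hasDerivAt_arccos (ne_of_gt hx.1) (ne_of_lt hx.2)).const_mul _
      have h2 := (Real.hasDerivAt_sin ((n : ℝ) * Real.arccos x)).comp x h1
      have h3 := (h2.neg).div_const ((n : ℝ) * Real.pi)
      refine h3.congr_deriv (Eq.symm ?_)
      have hTeval : (T ℝ n).eval x = Real.cos ((n : ℝ) * Real.arccos x) := by
        conv_lhs => rw [show x = Real.cos (Real.arccos x) from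
          (Real.cos_arccos (le_of_lt hx.1) (le_of_lt hx.2)).symm]
        exact T_real_cos (Real.arccos x) n
      rw [hTeval]
      unfold wCheb
      field_simp
    have hFcont : ContinuousOn F (Set.Icc (-1 : ℝ) 1) := by
      apply Continuous.continuousOn
      exact ((Real.continuous_sin.comp (continuous_const.mul Real.continuous_arccos)).neg).div_const _
    rw [intervalIntegral.integral_eq_sub_of_hasDerivAt_of_le hle hFcont hF hInt]
    have e1 : F 1 = 0 := by simp [hFdef, Real.arccos_one]
    have e2 : F (-1) = 0 := by
      simp only [hFdef, Real.arccos_neg_one]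
      rw [Real.sin_int_mul_pi n]
      simp
    rw [e1, e2, if_neg (by omega)]
    ring

lemma intTT (a b : ℤ) (ha : 1 ≤ a) (hb : 1 ≤ b) :
    ∫ x in Set.Icc (-1 : ℝ) 1, (T ℝ a).eval x * (T ℝ b).eval x * wCheb x
      = if a = b then 1 / 2 else 0 := by
  have hpt : ∀ x : ℝ, (T ℝ a).eval x * (T ℝ b).eval x * wCheb x
      = (1 / 2) * ((T ℝ (a + b)).eval x * wCheb x)
        + (1 / 2) * ((T ℝ (a - b)).eval x * wCheb x) := by
    intro x; rw [evalT_mul]; ring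
  simp only [hpt]
  rw [MeasureTheory.integral_add
      ((integrableOn_mul_wCheb (T ℝ (a + b)).continuous).const_mul _)
      ((integrableOn_mul_wCheb (T ℝ (a - b)).continuous).const_mul _),
    MeasureTheory.integral_const_mul, MeasureTheory.integral_const_mul]
  rw [intT_eq (a + b) (by omega), if_neg (by omega : ¬ a + b = 0)]
  rcases le_or_gt b a with h | h
  · rw [intT_eq (a - b) (by omega)]
    by_cases hab : a = b
    · rw [if_pos (by omega), if_pos hab]; ring
    · rw [if_neg (by omega), if_neg hab]; ring
  · rw [show a - b = -(b - a) by ring, T_neg, intT_eq (b - a) (by omega),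
      if_neg (by omega : ¬ b - a = 0), if_neg (by omega : ¬ a = b)]
    ring

/-- for `B(x) = T_1(x) − T_2(x) = x − (2x² − 1)` and the dynamics
`X ↦ T_2(X)`, the expected squared error is exactly `1/N²`. -/
theorem chebyshev_superefficient_example_T1_minus_T2
    (B : ℝ → ℝ) (hB : ∀ x, B x = x - (2 * x ^ 2 - 1))
    (σ : ℕ → ℝ)
    (hσ : ∀ N : ℕ, σ N =
      (1 / (N : ℝ)) *
        ((∫ x in Set.Icc (-1 : ℝ) 1, B x ^ 2 * (1 / (Real.pi * Real.sqrt (1 - x ^ 2))))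
          - (∫ x in Set.Icc (-1 : ℝ) 1, B x * (1 / (Real.pi * Real.sqrt (1 - x ^ 2)))) ^ 2)
      + (2 / (N : ℝ) ^ 2) * ∑ l ∈ Icc 1 N, ((N : ℝ) - (l : ℝ)) *
          ((∫ x in Set.Icc (-1 : ℝ) 1,
              B x * B ((T ℝ (2 ^ l : ℕ)).eval x) * (1 / (Real.pi * Real.sqrt (1 - x ^ 2))))
            - (∫ x in Set.Icc (-1 : ℝ) 1, B x * (1 / (Real.pi * Real.sqrt (1 - x ^ 2)))) ^ 2))
    (N : ℕ) (hN : 1 ≤ N) :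
    σ N = 1 / (N : ℝ) ^ 2 := by
  -- pointwise description of B in Chebyshev form
  have hBpt : ∀ x : ℝ, B x = (T ℝ 1).eval x - (T ℝ 2).eval x := by
    intro x
    rw [hB, T_one, T_two]
    simp
  -- ⟨B⟩ = 0
  have hIB : (∫ x in Set.Icc (-1 : ℝ) 1, B x * wCheb x) = 0 := by
    have hpt : ∀ x : ℝ, B x * wCheb x
        = (T ℝ 1).eval x * wCheb x - (T ℝ 2).eval x * wCheb x := by
      intro x; rw [hBpt]; ring
    simp only [hpt]
    rw [MeasureTheory.integral_sub (integrableOn_mul_wCheb (T ℝ 1).continuous)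
      (integrableOn_mul_wCheb (T ℝ 2).continuous),
      intT_eq 1 (by omega), intT_eq 2 (by omega)]
    norm_num
  -- ⟨B²⟩ = 1
  have hIB2 : (∫ x in Set.Icc (-1 : ℝ) 1, B x ^ 2 * wCheb x) = 1 := by
    have hpt : ∀ x : ℝ, B x ^ 2 * wCheb x
        = ((T ℝ 1).eval x * (T ℝ 1).eval x * wCheb x
            - 2 * ((T ℝ 1).eval x * (T ℝ 2).eval x * wCheb x))
          + (T ℝ 2).eval x * (T ℝ 2).eval x * wCheb x := by
      intro x; rw [hBpt]; ring
    simp only [hpt]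
    have i11 : IntegrableOn (fun x => (T ℝ 1).eval x * (T ℝ 1).eval x * wCheb x)
        (Set.Icc (-1 : ℝ) 1) :=
      integrableOn_mul_wCheb ((T ℝ 1).continuous.mul (T ℝ 1).continuous)
    have i12 : IntegrableOn (fun x => 2 * ((T ℝ 1).eval x * (T ℝ 2).eval x * wCheb x))
        (Set.Icc (-1 : ℝ) 1) :=
      (integrableOn_mul_wCheb ((T ℝ 1).continuous.mul (T ℝ 2).continuous)).const_mul 2
    have i1 : IntegrableOn (fun x => (T ℝ 1).eval x * (T ℝ 1).eval x * wCheb x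
        - 2 * ((T ℝ 1).eval x * (T ℝ 2).eval x * wCheb x)) (Set.Icc (-1 : ℝ) 1) := i11.sub i12
    have i22 : IntegrableOn (fun x => (T ℝ 2).eval x * (T ℝ 2).eval x * wCheb x)
        (Set.Icc (-1 : ℝ) 1) :=
      integrableOn_mul_wCheb ((T ℝ 2).continuous.mul (T ℝ 2).continuous)
    rw [MeasureTheory.integral_add i1 i22, MeasureTheory.integral_sub i11 i12,
      MeasureTheory.integral_const_mul,
      intTT 1 1 (by omega) (by omega), intTT 1 2 (by omega) (by omega),
      intTT 2 2 (by omega) (by omega)]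
    norm_num
  -- cross terms
  have hcross : ∀ l : ℕ, 1 ≤ l →
      (∫ x in Set.Icc (-1 : ℝ) 1, B x * B ((T ℝ (2 ^ l : ℕ)).eval x) * wCheb x)
        = if l = 1 then -(1 / 2) else 0 := by
    intro l hl
    set m : ℤ := ((2 ^ l : ℕ) : ℤ) with hm
    have hm2 : 2 ≤ m := by
      rw [hm]
      exact_mod_cast Nat.one_lt_two_pow_iff.mpr (by omega)
    have hcomp : ∀ x : ℝ, (T ℝ 2).eval ((T ℝ m).eval x) = (T ℝ (2 * m)).eval x := by
      intro x
      rw [T_mul ℝ 2 m, Polynomial.eval_comp]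
    have hpt : ∀ x : ℝ, B x * B ((T ℝ (2 ^ l : ℕ)).eval x) * wCheb x
        = (((T ℝ 1).eval x * (T ℝ m).eval x * wCheb x
            - (T ℝ 1).eval x * (T ℝ (2 * m)).eval x * wCheb x)
           - (T ℝ 2).eval x * (T ℝ m).eval x * wCheb x)
          + (T ℝ 2).eval x * (T ℝ (2 * m)).eval x * wCheb x := by
      intro x
      have hBm : B ((T ℝ (2 ^ l : ℕ)).eval x)
          = (T ℝ m).eval x - (T ℝ (2 * m)).eval x := by
        rw [hB, ← hcomp x, T_two]
        push_cast [hm]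
        simp
      rw [hBm, hBpt]
      ring
    simp only [← hm] at hpt
    simp only [hpt]
    have j1m : IntegrableOn (fun x => (T ℝ 1).eval x * (T ℝ m).eval x * wCheb x)
        (Set.Icc (-1 : ℝ) 1) :=
      integrableOn_mul_wCheb ((T ℝ 1).continuous.mul (T ℝ m).continuous)
    have j1m2 : IntegrableOn (fun x => (T ℝ 1).eval x * (T ℝ (2 * m)).eval x * wCheb x)
        (Set.Icc (-1 : ℝ) 1) :=
      integrableOn_mul_wCheb ((T ℝ 1).continuous.mul (T ℝ (2 * m)).continuous)
    have j2m : IntegrableOn (fun x => (T ℝ 2).eval x * (T ℝ m).eval x * wCheb x)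
        (Set.Icc (-1 : ℝ) 1) :=
      integrableOn_mul_wCheb ((T ℝ 2).continuous.mul (T ℝ m).continuous)
    have j2m2 : IntegrableOn (fun x => (T ℝ 2).eval x * (T ℝ (2 * m)).eval x * wCheb x)
        (Set.Icc (-1 : ℝ) 1) :=
      integrableOn_mul_wCheb ((T ℝ 2).continuous.mul (T ℝ (2 * m)).continuous)
    have ja : IntegrableOn (fun x => (T ℝ 1).eval x * (T ℝ m).eval x * wCheb x
        - (T ℝ 1).eval x * (T ℝ (2 * m)).eval x * wCheb x) (Set.Icc (-1 : ℝ) 1) :=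
      j1m.sub j1m2
    have jb : IntegrableOn (fun x => ((T ℝ 1).eval x * (T ℝ m).eval x * wCheb x
        - (T ℝ 1).eval x * (T ℝ (2 * m)).eval x * wCheb x)
        - (T ℝ 2).eval x * (T ℝ m).eval x * wCheb x) (Set.Icc (-1 : ℝ) 1) := ja.sub j2m
    rw [MeasureTheory.integral_add jb j2m2, MeasureTheory.integral_sub ja j2m,
      MeasureTheory.integral_sub j1m j1m2,
      intTT 1 m (by omega) (by omega), intTT 1 (2 * m) (by omega) (by omega),
      intTT 2 m (by omega) (by omega), intTT 2 (2 * m) (by omega) (by omega)]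
    have h1 : ¬ (1 : ℤ) = m := by omega
    have h2 : ¬ (1 : ℤ) = 2 * m := by omega
    have h4 : ¬ (2 : ℤ) = 2 * m := by omega
    rw [if_neg h1, if_neg h2, if_neg h4]
    by_cases hl1 : l = 1
    · have : (2 : ℤ) = m := by rw [hm, hl1]; norm_num
      rw [if_pos this, if_pos hl1]
      ring
    · have : ¬ (2 : ℤ) = m := by
        intro h
        have : (2 : ℕ) ^ l = 2 ^ 1 := by
          have := h.symm
          rw [hm] at this
          exact_mod_cast this
        exact hl1 (Nat.pow_right_injective (le_refl 2) this)
      rw [if_neg this, if_neg hl1]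
      ring
  -- assemble
  rw [hσ N]
  simp only [wCheb_def]
  rw [hIB, hIB2]
  have hsum : ∑ l ∈ Icc 1 N, ((N : ℝ) - (l : ℝ)) *
      ((∫ x in Set.Icc (-1 : ℝ) 1,
          B x * B ((T ℝ (2 ^ l : ℕ)).eval x) * wCheb x) - (0 : ℝ) ^ 2)
      = -(((N : ℝ) - 1) / 2) := by
    rw [Finset.sum_congr rfl (fun l hl => by
      rw [hcross l (Finset.mem_Icc.mp hl).1])]
    rw [Finset.sum_eq_single_of_mem 1 (Finset.mem_Icc.mpr ⟨le_refl 1, hN⟩)]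
    · norm_num
      ring
    · intro l _ hl1
      rw [if_neg hl1]
      norm_num
  rw [hsum]
  have hN0 : (N : ℝ) ≠ 0 := Nat.cast_ne_zero.mpr (by omega)
  field_simp
  ring
end

section
/- With the setup of the multi-dimensional Chebyshev integrand, for N ≥ L the expected squared error satisfies σ(N) = (1/(2^s N))(Σ_{m=0}^{L} a_m)² − (1/(2^{s−1} N²)) Σ_{l=1}^{L} Σ_{m=l}^{L} l·a_m·a_{m−l}; in particular if Σ_{m=0}^{L} a_m = 0 then σ(N) = O(1/N²). -/
open Polynomial Polynomial.Chebyshev MeasureTheory Finset Asymptotics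

namespace ChebAux

open Set Real
open scoped ENNReal NNReal

noncomputable def chw (x : ℝ) : ℝ := 1 / (Real.pi * Real.sqrt (1 - x ^ 2))

lemma chw_nonneg (x : ℝ) : 0 ≤ chw x := by
  unfold chw; positivity

lemma chw_meas : Measurable chw := by unfold chw; fun_prop

lemma hasDeriv_arcsinpi : ∀ x ∈ Ioo (-1:ℝ) 1,
    HasDerivAt (fun y => Real.arcsin y / Real.pi) (chw x) x := by
  intro x hx
  have h := (Real.hasDerivAt_arcsin (ne_of_gt hx.1) (ne_of_lt hx.2)).div_const Real.pi
  refine h.congr_deriv (Eq.symm ?_)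
  unfold chw
  rw [div_div, mul_comm]

lemma integrableOn_chw : IntegrableOn chw (Set.Ioc (-1:ℝ) 1) := by
  apply intervalIntegral.integrableOn_deriv_of_nonneg
    (((Real.continuous_arcsin).div_const Real.pi).continuousOn) hasDeriv_arcsinpi
  intro x _; exact chw_nonneg x

lemma intervalIntegrable_chw : IntervalIntegrable chw volume (-1 : ℝ) 1 :=
  (intervalIntegrable_iff_integrableOn_Ioc_of_le (by norm_num)).2 integrableOn_chw

lemma chF_meas (n : ℤ) : Measurable (fun x => Real.cos (n * Real.arccos x) * chw x) := by
  have : Measurable Real.arccos := Real.continuous_arccos.measurable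
  exact ((Real.continuous_cos.measurable.comp (this.const_mul _))).mul chw_meas

lemma chF_intervalIntegrable (n : ℤ) :
    IntervalIntegrable (fun x => Real.cos (n * Real.arccos x) * chw x) volume (-1 : ℝ) 1 := by
  rw [intervalIntegrable_iff_integrableOn_Ioc_of_le (by norm_num)]
  refine integrableOn_chw.mono' ((chF_meas n).aestronglyMeasurable.restrict) ?_
  filter_upwards with x
  rw [norm_mul, Real.norm_eq_abs, Real.norm_eq_abs, abs_of_nonneg (chw_nonneg x)]
  calc |Real.cos (n * Real.arccos x)| * chw x ≤ 1 * chw x := by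
        apply mul_le_mul_of_nonneg_right (Real.abs_cos_le_one _) (chw_nonneg x)
    _ = chw x := one_mul _

lemma chw_int : ∫ x in (-1:ℝ)..1, chw x = 1 := by
  rw [intervalIntegral.integral_eq_sub_of_hasDeriv_right_of_le (by norm_num)
    (((Real.continuous_arcsin).div_const Real.pi).continuousOn)
    (fun x hx => (hasDeriv_arcsinpi x hx).hasDerivWithinAt) intervalIntegrable_chw]
  rw [Real.arcsin_one, Real.arcsin_neg_one]
  field_simp
  ring

lemma chH (n : ℤ) :
    ∫ x in (-1:ℝ)..1, Real.cos (n * Real.arccos x) * chw x = if n = 0 then 1 else 0 := by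
  by_cases hn : n = 0
  · subst hn
    simp only [Int.cast_zero, zero_mul, Real.cos_zero, one_mul, if_true, chw_int]
  · rw [if_neg hn]
    have hnR : (n : ℝ) ≠ 0 := Int.cast_ne_zero.mpr hn
    set G : ℝ → ℝ := fun y => -(Real.sin (n * Real.arccos y)) / (n * Real.pi) with hG
    have hcont : ContinuousOn G (Set.Icc (-1:ℝ) 1) := by
      rw [hG]
      apply Continuous.continuousOn
      exact (Real.continuous_sin.comp ((continuous_const).mul Real.continuous_arccos)).neg.div_const _
    have hderiv : ∀ x ∈ Ioo (-1:ℝ) 1,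
        HasDerivAt G (Real.cos (n * Real.arccos x) * chw x) x := by
      intro x hx
      have h1 : x ≠ -1 := ne_of_gt hx.1
      have h2 : x ≠ 1 := ne_of_lt hx.2
      have ha := Real.hasDerivAt_arccos h1 h2
      have hb : HasDerivAt (fun y => (n:ℝ) * Real.arccos y) ((n:ℝ) * -(1 / Real.sqrt (1 - x ^ 2))) x :=
        ha.const_mul _
      have hc : HasDerivAt (fun y => Real.sin ((n:ℝ) * Real.arccos y))
          (Real.cos ((n:ℝ) * Real.arccos x) * ((n:ℝ) * -(1 / Real.sqrt (1 - x ^ 2)))) x :=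
        (Real.hasDerivAt_sin _).comp x hb
      have hd := (hc.neg).div_const ((n:ℝ) * Real.pi)
      refine hd.congr_deriv (Eq.symm ?_)
      have hs : Real.sqrt (1 - x ^ 2) ≠ 0 := by
        refine ne_of_gt (Real.sqrt_pos.2 ?_)
        nlinarith [hx.1, hx.2]
      unfold chw
      field_simp
    rw [intervalIntegral.integral_eq_sub_of_hasDeriv_right_of_le (by norm_num) hcont
      (fun x hx => (hderiv x hx).hasDerivWithinAt) (chF_intervalIntegrable n)]
    rw [hG]
    simp only [Real.arccos_one, Real.arccos_neg_one, mul_zero, Real.sin_zero,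
      Real.sin_int_mul_pi, neg_zero, zero_div, sub_zero, sub_self]


noncomputable def chnu : Measure ℝ :=
  (volume.restrict (Set.Icc (-1 : ℝ) 1)).withDensity (fun x => ENNReal.ofReal (chw x))

lemma chnu_integral (f : ℝ → ℝ) :
    ∫ x, f x ∂chnu = ∫ x in (-1:ℝ)..1, f x * chw x := by
  have h1 : (fun x => ENNReal.ofReal (chw x)) = (fun x => ((chw x).toNNReal : ℝ≥0∞)) := rfl
  have hm : Measurable fun x => (chw x).toNNReal := measurable_real_toNNReal.comp chw_meas
  rw [chnu, h1, integral_withDensity_eq_integral_smul hm f]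
  have h2 : ∀ x, (chw x).toNNReal • f x = chw x * f x := by
    intro x
    rw [NNReal.smul_def, Real.coe_toNNReal _ (chw_nonneg x), smul_eq_mul]
  simp only [h2]
  rw [MeasureTheory.integral_Icc_eq_integral_Ioc,
    intervalIntegral.integral_of_le (by norm_num : (-1:ℝ) ≤ 1)]
  congr 1
  ext x
  exact mul_comm _ _

lemma chnu_univ : chnu Set.univ = 1 := by
  rw [chnu, withDensity_apply _ MeasurableSet.univ, Measure.restrict_univ]
  have hInt : IntegrableOn chw (Set.Icc (-1:ℝ) 1) := by
    rw [integrableOn_Icc_iff_integrableOn_Ioc]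
    exact integrableOn_chw
  rw [← ofReal_integral_eq_lintegral_ofReal hInt
    (Filter.Eventually.of_forall fun x => chw_nonneg x)]
  rw [MeasureTheory.integral_Icc_eq_integral_Ioc,
    ← intervalIntegral.integral_of_le (by norm_num : (-1:ℝ) ≤ 1), chw_int]
  simp

instance chnu_isProb : IsProbabilityMeasure chnu := ⟨chnu_univ⟩

lemma chnu_ae_mem : ∀ᵐ x ∂chnu, x ∈ Set.Icc (-1:ℝ) 1 := by
  have h := MeasureTheory.withDensity_absolutelyContinuous
    (volume.restrict (Set.Icc (-1 : ℝ) 1)) (fun x => ENNReal.ofReal (chw x))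
  exact h.ae_le (ae_restrict_mem measurableSet_Icc)

lemma chnu_int_poly (q : ℝ[X]) : Integrable (fun x => q.eval x) chnu := by
  obtain ⟨C, hC⟩ := isCompact_Icc.exists_bound_of_continuousOn
    (q.continuous.continuousOn : ContinuousOn (fun x => q.eval x) (Set.Icc (-1:ℝ) 1))
  refine Integrable.mono' (integrable_const C) q.continuous.measurable.aestronglyMeasurable ?_
  filter_upwards [chnu_ae_mem] with x hx
  exact hC x hx

lemma chnu_T (n : ℤ) : ∫ x, (T ℝ n).eval x ∂chnu = if n = 0 then 1 else 0 := by
  rw [chnu_integral]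
  rw [← chH n]
  apply intervalIntegral.integral_congr
  intro x hx
  rw [Set.uIcc_of_le (by norm_num : (-1:ℝ) ≤ 1)] at hx
  show (T ℝ n).eval x * chw x = Real.cos (n * Real.arccos x) * chw x
  have : (T ℝ n).eval x = Real.cos (n * Real.arccos x) := by
    conv_lhs => rw [← Real.cos_arccos hx.1 hx.2]
    exact T_real_cos _ n
  rw [this]

lemma chnu_TT (n k : ℤ) (hn : 1 ≤ n) (hk : 1 ≤ k) :
    ∫ x, (T ℝ n).eval x * (T ℝ k).eval x ∂chnu = if n = k then (2:ℝ)⁻¹ else 0 := by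
  rw [chnu_integral]
  have heq : Set.EqOn (fun x => (T ℝ n).eval x * (T ℝ k).eval x * chw x)
      (fun x => (Real.cos ((n+k : ℤ) * Real.arccos x) * chw x
        + Real.cos ((n-k : ℤ) * Real.arccos x) * chw x) / 2)
      (Set.uIcc (-1:ℝ) 1) := by
    intro x hx
    rw [Set.uIcc_of_le (by norm_num : (-1:ℝ) ≤ 1)] at hx
    show (T ℝ n).eval x * (T ℝ k).eval x * chw x = _
    have h1 : (T ℝ n).eval x = Real.cos (n * Real.arccos x) := by
      conv_lhs => rw [← Real.cos_arccos hx.1 hx.2]; exact T_real_cos _ n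
    have h2 : (T ℝ k).eval x = Real.cos (k * Real.arccos x) := by
      conv_lhs => rw [← Real.cos_arccos hx.1 hx.2]; exact T_real_cos _ k
    simp only [h1, h2]
    push_cast
    rw [add_mul, sub_mul, Real.cos_add, Real.cos_sub]
    ring
  rw [intervalIntegral.integral_congr heq]
  rw [intervalIntegral.integral_div, intervalIntegral.integral_add
    (chF_intervalIntegrable (n+k)) (chF_intervalIntegrable (n-k)), chH, chH]
  have hnk : ¬ (n + k = 0) := by omega
  rw [if_neg hnk]
  by_cases h : n = k
  · rw [if_pos h, if_pos (by omega)]; norm_num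
  · rw [if_neg h, if_neg (by omega)]; norm_num


lemma chnu_def : chnu = (volume.restrict (Set.Icc (-1 : ℝ) 1)).withDensity
    (fun x => ENNReal.ofReal (1 / (Real.pi * Real.sqrt (1 - x ^ 2)))) := rfl

section PiLemmas

lemma pi_integral {n : ℕ} (ν : Measure ℝ) [SigmaFinite ν] (f : Fin n → ℝ → ℝ) :
    ∫ x : Fin n → ℝ, ∏ i, f i (x i) ∂(Measure.pi fun _ => ν) = ∏ i, ∫ x, f i x ∂ν := by
  letI : MeasureSpace ℝ := ⟨ν⟩
  haveI : SigmaFinite (volume : Measure ℝ) := ‹SigmaFinite ν›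
  exact MeasureTheory.integral_fintype_prod_eq_prod f

lemma pi_integrable {n : ℕ} (ν : Measure ℝ) [SigmaFinite ν] (f : Fin n → ℝ → ℝ)
    (hf : ∀ i, Integrable (f i) ν) :
    Integrable (fun x : Fin n → ℝ => ∏ i, f i (x i)) (Measure.pi fun _ => ν) := by
  letI : MeasureSpace ℝ := ⟨ν⟩
  haveI : SigmaFinite (volume : Measure ℝ) := ‹SigmaFinite ν›
  exact MeasureTheory.Integrable.fintype_prod hf

end PiLemmas

-- iterate of T_p is T_{p^l}
lemma iterT (q : ℕ) (l : ℕ) (y : ℝ) :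
    (fun t => (T ℝ (q : ℤ)).eval t)^[l] y = (T ℝ ((q ^ l : ℕ) : ℤ)).eval y := by
  induction l generalizing y with
  | zero => simp [Function.iterate_zero, pow_zero, T_one]
  | succ l ih =>
      rw [Function.iterate_succ_apply, ih]
      have : ((q ^ (l + 1) : ℕ) : ℤ) = ((q ^ l : ℕ) : ℤ) * (q : ℤ) := by
        push_cast [pow_succ]; ring
      rw [this, T_mul, eval_comp]

lemma reindex (a : ℕ → ℝ) (L l : ℕ) :
    ∑ m' ∈ range (L + 1), (if m' + l ≤ L then a (m' + l) * a m' else 0)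
      = ∑ m ∈ Finset.Icc l L, a m * a (m - l) := by
  rw [← Finset.sum_filter]
  apply Finset.sum_nbij' (fun m' => m' + l) (fun m => m - l) <;>
    (intro x hx;
     simp only [Finset.mem_filter, Finset.mem_range, Finset.mem_Icc] at hx ⊢) <;>
    first
      | omega
      | (rw [Nat.add_sub_cancel])

lemma sum_reflect (a : ℕ → ℝ) (L : ℕ) :
    ∑ l ∈ Finset.Icc 1 L, a (L + 1 - l) = ∑ m ∈ Finset.Icc 1 L, a m := by
  apply Finset.sum_nbij' (fun l => L + 1 - l) (fun m => L + 1 - m) <;>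
    (intro x hx; simp only [Finset.mem_Icc] at hx ⊢) <;>
    first
      | omega
      | (congr 1; omega)

lemma D_succ (a : ℕ → ℝ) (L : ℕ) :
    ∑ l ∈ Finset.Icc 1 (L + 1), ∑ m ∈ Finset.Icc l (L + 1), a m * a (m - l)
      = (∑ l ∈ Finset.Icc 1 L, ∑ m ∈ Finset.Icc l L, a m * a (m - l))
        + a (L + 1) * ∑ m ∈ range (L + 1), a m := by
  rw [Finset.sum_Icc_succ_top (by omega : 1 ≤ L + 1)]
  have h1 : ∀ l ∈ Finset.Icc 1 L,
      ∑ m ∈ Finset.Icc l (L + 1), a m * a (m - l)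
        = (∑ m ∈ Finset.Icc l L, a m * a (m - l)) + a (L + 1) * a (L + 1 - l) := by
    intro l hl
    simp only [Finset.mem_Icc] at hl
    rw [Finset.sum_Icc_succ_top (by omega : l ≤ L + 1)]
  rw [Finset.sum_congr rfl h1, Finset.sum_add_distrib]
  have h2 : ∑ m ∈ Finset.Icc (L + 1) (L + 1), a m * a (m - (L + 1))
      = a (L + 1) * a 0 := by
    rw [Finset.Icc_self, Finset.sum_singleton, Nat.sub_self]
  rw [h2]
  have h3 : ∑ l ∈ Finset.Icc 1 L, a (L + 1) * a (L + 1 - l)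
      = a (L + 1) * ∑ l ∈ Finset.Icc 1 L, a (L + 1 - l) := by
    rw [Finset.mul_sum]
  rw [h3, sum_reflect]
  have h4 : ∑ m ∈ range (L + 1 + 1 - 1), a m = a 0 + ∑ m ∈ Finset.Icc 1 L, a m := by
    have : range (L + 1) = insert 0 (Finset.Icc 1 L) := by
      ext x; simp only [Finset.mem_range, Finset.mem_insert, Finset.mem_Icc]; omega
    rw [show L + 1 + 1 - 1 = L + 1 from rfl, this, Finset.sum_insert (by simp)]
  rw [show L + 1 + 1 - 1 = L + 1 from rfl] at h4
  rw [h4]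
  ring

lemma sq_expand (a : ℕ → ℝ) (L : ℕ) :
    (∑ m ∈ range (L + 1), a m) ^ 2
      = ∑ m ∈ range (L + 1), a m ^ 2
        + 2 * ∑ l ∈ Finset.Icc 1 L, ∑ m ∈ Finset.Icc l L, a m * a (m - l) := by
  induction L with
  | zero => simp
  | succ L ih =>
      rw [Finset.sum_range_succ (f := a), Finset.sum_range_succ (f := fun m => a m ^ 2),
        D_succ, add_sq, ih]
      ring


noncomputable def piM (s : ℕ) : Measure (Fin s → ℝ) := Measure.pi fun _ => chnu

instance (s : ℕ) : IsProbabilityMeasure (piM s) := by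
  unfold piM; infer_instance

lemma P_integrable (s : ℕ) (e : Fin s → ℕ) :
    Integrable (fun x : Fin s → ℝ => ∏ i, (T ℝ (e i : ℤ)).eval (x i)) (piM s) :=
  pi_integrable chnu _ (fun i => chnu_int_poly _)

lemma PP_integrable (s : ℕ) (e f : Fin s → ℕ) :
    Integrable (fun x : Fin s → ℝ =>
      ∏ i, ((T ℝ (e i : ℤ)).eval (x i) * (T ℝ (f i : ℤ)).eval (x i))) (piM s) := by
  have h : ∀ i : Fin s, Integrable (fun t : ℝ =>
      (T ℝ (e i : ℤ)).eval t * (T ℝ (f i : ℤ)).eval t) chnu := by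
    intro i
    have := chnu_int_poly (T ℝ (e i : ℤ) * T ℝ (f i : ℤ))
    simpa [eval_mul] using this
  exact pi_integrable chnu (fun i t => (T ℝ (e i : ℤ)).eval t * (T ℝ (f i : ℤ)).eval t) h

lemma P_val (s : ℕ) (hs : 1 ≤ s) (e : Fin s → ℕ) (he : ∀ i, 1 ≤ e i) :
    ∫ x : Fin s → ℝ, ∏ i, (T ℝ (e i : ℤ)).eval (x i) ∂(piM s) = 0 := by
  have h := pi_integral chnu (fun (i : Fin s) (t : ℝ) => (T ℝ (e i : ℤ)).eval t)
  rw [piM, h]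
  apply Finset.prod_eq_zero (Finset.mem_univ (⟨0, hs⟩ : Fin s))
  rw [chnu_T, if_neg]
  have := he ⟨0, hs⟩
  omega

lemma PP_val_eq (s : ℕ) (e : Fin s → ℕ) (he : ∀ i, 1 ≤ e i) :
    ∫ x : Fin s → ℝ, ∏ i, ((T ℝ (e i : ℤ)).eval (x i) * (T ℝ (e i : ℤ)).eval (x i)) ∂(piM s)
      = ((2:ℝ) ^ s)⁻¹ := by
  have h := pi_integral chnu (fun (i : Fin s) (t : ℝ) =>
    (T ℝ (e i : ℤ)).eval t * (T ℝ (e i : ℤ)).eval t)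
  rw [piM, h]
  have : ∀ i : Fin s, ∫ x, (T ℝ (e i : ℤ)).eval x * (T ℝ (e i : ℤ)).eval x ∂chnu = (2:ℝ)⁻¹ := by
    intro i
    rw [chnu_TT _ _ (by exact_mod_cast he i) (by exact_mod_cast he i), if_pos rfl]
  rw [Finset.prod_congr rfl (fun i _ => this i), Finset.prod_const, ← inv_pow]
  simp

lemma PP_val_ne (s : ℕ) (hs : 1 ≤ s) (e f : Fin s → ℕ) (he : ∀ i, 1 ≤ e i)
    (hf : ∀ i, 1 ≤ f i) (hne : ∀ i, e i ≠ f i) :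
    ∫ x : Fin s → ℝ, ∏ i, ((T ℝ (e i : ℤ)).eval (x i) * (T ℝ (f i : ℤ)).eval (x i)) ∂(piM s)
      = 0 := by
  have h := pi_integral chnu (fun (i : Fin s) (t : ℝ) =>
    (T ℝ (e i : ℤ)).eval t * (T ℝ (f i : ℤ)).eval t)
  rw [piM, h]
  apply Finset.prod_eq_zero (Finset.mem_univ (⟨0, hs⟩ : Fin s))
  rw [chnu_TT _ _ (by exact_mod_cast he ⟨0, hs⟩) (by exact_mod_cast hf ⟨0, hs⟩), if_neg]
  have := hne ⟨0, hs⟩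
  exact_mod_cast this

lemma sum_P_val (s L : ℕ) (hs : 1 ≤ s) (a : ℕ → ℝ) (e : ℕ → Fin s → ℕ)
    (he : ∀ m i, 1 ≤ e m i) :
    ∫ x : Fin s → ℝ, ∑ m ∈ range (L + 1), a m * ∏ i, (T ℝ (e m i : ℤ)).eval (x i) ∂(piM s)
      = 0 := by
  rw [integral_finset_sum _ (fun m _ => ((P_integrable s (e m)).const_mul (a m)))]
  apply Finset.sum_eq_zero
  intro m _
  rw [MeasureTheory.integral_const_mul, P_val s hs _ (he m), mul_zero]

lemma sum_P_integrable (s L : ℕ) (a : ℕ → ℝ) (e : ℕ → Fin s → ℕ) :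
    Integrable (fun x : Fin s → ℝ =>
      ∑ m ∈ range (L + 1), a m * ∏ i, (T ℝ (e m i : ℤ)).eval (x i)) (piM s) :=
  integrable_finset_sum _ (fun m _ => ((P_integrable s (e m)).const_mul (a m)))

lemma mean_int (s L : ℕ) (hs : 1 ≤ s) (ac : ℝ) (a : ℕ → ℝ) (p : Fin s → ℕ)
    (hp : ∀ i, 2 ≤ p i) :
    ∫ x : Fin s → ℝ,
      (ac + ∑ m ∈ range (L + 1), a m * ∏ i, (T ℝ ((p i ^ m : ℕ) : ℤ)).eval (x i)) ∂(piM s)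
      = ac := by
  rw [integral_add (integrable_const ac)
    (sum_P_integrable s L a (fun m i => p i ^ m)),
    sum_P_val s L hs a _ (fun m i => Nat.one_le_pow _ _ (by have := hp i; omega))]
  simp

lemma key_int (s L : ℕ) (hs : 1 ≤ s) (ac : ℝ) (a : ℕ → ℝ) (p : Fin s → ℕ)
    (hp : ∀ i, 2 ≤ p i) (l : ℕ) :
    ∫ x : Fin s → ℝ,
      (ac + ∑ m ∈ range (L + 1), a m * ∏ i, (T ℝ ((p i ^ m : ℕ) : ℤ)).eval (x i))
      * (ac + ∑ m ∈ range (L + 1), a m * ∏ i, (T ℝ ((p i ^ (m + l) : ℕ) : ℤ)).eval (x i))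
      ∂(piM s)
    = ac ^ 2 + ((2:ℝ) ^ s)⁻¹ * ∑ m ∈ Finset.Icc l L, a m * a (m - l) := by
  set P : ℕ → (Fin s → ℝ) → ℝ := fun m x => ∏ i, (T ℝ ((p i ^ m : ℕ) : ℤ)).eval (x i) with hP
  set P' : ℕ → (Fin s → ℝ) → ℝ := fun m x => ∏ i, (T ℝ ((p i ^ (m + l) : ℕ) : ℤ)).eval (x i) with hP'
  have hpow : ∀ (i : Fin s) (m : ℕ), 1 ≤ p i ^ m :=
    fun i m => Nat.one_le_pow _ _ (by have := hp i; omega)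
  -- pointwise expansion
  have hexp : ∀ x : Fin s → ℝ,
      (ac + ∑ m ∈ range (L + 1), a m * P m x) * (ac + ∑ m ∈ range (L + 1), a m * P' m x)
      = (ac ^ 2 + ac * ∑ m ∈ range (L + 1), a m * P' m x)
        + ((∑ m ∈ range (L + 1), a m * P m x) * ac
           + ∑ m ∈ range (L + 1), ∑ k ∈ range (L + 1), (a m * a k) * (P m x * P' k x)) := by
    intro x
    have hSS : (∑ m ∈ range (L + 1), a m * P m x) * (∑ k ∈ range (L + 1), a k * P' k x)
        = ∑ m ∈ range (L + 1), ∑ k ∈ range (L + 1), (a m * a k) * (P m x * P' k x) := by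
      rw [Finset.sum_mul_sum]
      exact Finset.sum_congr rfl fun m _ => Finset.sum_congr rfl fun k _ => by ring
    rw [← hSS]
    ring
  refine (integral_congr_ae (Filter.Eventually.of_forall hexp)).trans ?_
  -- integrability pieces
  have iS : Integrable (fun x => ∑ m ∈ range (L + 1), a m * P m x) (piM s) :=
    sum_P_integrable s L a (fun m i => p i ^ m)
  have iS' : Integrable (fun x => ∑ m ∈ range (L + 1), a m * P' m x) (piM s) :=
    sum_P_integrable s L a (fun m i => p i ^ (m + l))
  have iPP : ∀ m k : ℕ, Integrable (fun x => P m x * P' k x) (piM s) := by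
    intro m k
    have : (fun x => P m x * P' k x)
        = fun x : Fin s → ℝ =>
            ∏ i, ((T ℝ ((p i ^ m : ℕ) : ℤ)).eval (x i)
              * (T ℝ ((p i ^ (k + l) : ℕ) : ℤ)).eval (x i)) := by
      funext x
      rw [hP, hP', ← Finset.prod_mul_distrib]
    rw [this]
    exact PP_integrable s _ _
  have i4 : Integrable (fun x => ∑ m ∈ range (L + 1), ∑ k ∈ range (L + 1),
      (a m * a k) * (P m x * P' k x)) (piM s) :=
    integrable_finset_sum _ (fun m _ => integrable_finset_sum _
      (fun k _ => ((iPP m k).const_mul _)))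
  have I2 : Integrable (fun x => ac * ∑ m ∈ range (L + 1), a m * P' m x) (piM s) :=
    iS'.const_mul ac
  have I3 : Integrable (fun x => (∑ m ∈ range (L + 1), a m * P m x) * ac) (piM s) :=
    iS.mul_const ac
  have I1 : Integrable (fun x => ac ^ 2 + ac * ∑ m ∈ range (L + 1), a m * P' m x) (piM s) :=
    (integrable_const _).add I2
  have I34 : Integrable (fun x => (∑ m ∈ range (L + 1), a m * P m x) * ac
      + ∑ m ∈ range (L + 1), ∑ k ∈ range (L + 1), (a m * a k) * (P m x * P' k x)) (piM s) :=
    I3.add i4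
  rw [integral_add I1 I34,
    integral_add (integrable_const (ac ^ 2)) I2,
    integral_add I3 i4,
    MeasureTheory.integral_const_mul, MeasureTheory.integral_mul_const,
    sum_P_val s L hs a _ (fun m i => hpow i (m + l)),
    sum_P_val s L hs a _ (fun m i => hpow i m)]
  simp only [measure_univ, ENNReal.toReal_one, smul_eq_mul, one_mul, mul_zero, zero_mul,
    add_zero, zero_add, integral_const, probReal_univ]
  -- the double sum
  have hPPval : ∀ m k : ℕ, ∫ x, P m x * P' k x ∂(piM s)
      = if m = k + l then ((2:ℝ) ^ s)⁻¹ else 0 := by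
    intro m k
    have hrw : (fun x => P m x * P' k x)
        = fun x : Fin s → ℝ =>
            ∏ i, ((T ℝ ((p i ^ m : ℕ) : ℤ)).eval (x i)
              * (T ℝ ((p i ^ (k + l) : ℕ) : ℤ)).eval (x i)) := by
      funext x
      rw [hP, hP', ← Finset.prod_mul_distrib]
    rw [hrw]
    by_cases hmk : m = k + l
    · subst hmk
      rw [if_pos rfl]
      exact PP_val_eq s _ (fun i => hpow i _)
    · rw [if_neg hmk]
      refine PP_val_ne s hs _ _ (fun i => hpow i m) (fun i => hpow i (k + l)) (fun i => ?_)
      intro hcon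
      exact hmk (Nat.pow_right_injective (hp i) hcon)
  rw [integral_finset_sum _ (fun m _ => integrable_finset_sum _
      (fun k _ => ((iPP m k).const_mul _)))]
  have : ∀ m ∈ range (L + 1),
      ∫ x, ∑ k ∈ range (L + 1), (a m * a k) * (P m x * P' k x) ∂(piM s)
        = ∑ k ∈ range (L + 1), (a m * a k) * (if m = k + l then ((2:ℝ) ^ s)⁻¹ else 0) := by
    intro m _
    rw [integral_finset_sum _ (fun k _ => ((iPP m k).const_mul _))]
    exact Finset.sum_congr rfl fun k _ => by rw [MeasureTheory.integral_const_mul, hPPval]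
  rw [Finset.sum_congr rfl this, Finset.sum_comm]
  have hinner : ∀ k ∈ range (L + 1),
      ∑ m ∈ range (L + 1), (a m * a k) * (if m = k + l then ((2:ℝ) ^ s)⁻¹ else 0)
        = ((2:ℝ) ^ s)⁻¹ * (if k + l ≤ L then a (k + l) * a k else 0) := by
    intro k _
    have : ∀ m, (a m * a k) * (if m = k + l then ((2:ℝ) ^ s)⁻¹ else 0)
        = if m = k + l then (a m * a k) * ((2:ℝ) ^ s)⁻¹ else 0 := by
      intro m; split <;> simp
    simp only [this]
    rw [Finset.sum_ite_eq' (range (L + 1)) (k + l) (fun m => (a m * a k) * ((2:ℝ) ^ s)⁻¹)]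
    simp only [Finset.mem_range]
    by_cases h : k + l ≤ L
    · rw [if_pos (by omega), if_pos h]; ring
    · rw [if_neg (by omega), if_neg h, mul_zero]
  rw [Finset.sum_congr rfl hinner, ← Finset.mul_sum, reindex]


end ChebAux

open ChebAux

/-- exact expected squared error for the multi-dimensional
Chebyshev integrand, and superefficiency when `Σ a_m = 0`. -/
theorem multidim_chebyshev_superefficiency
    (s : ℕ) (hs : 1 ≤ s) (L : ℕ) (ac : ℝ) (a : ℕ → ℝ)
    (p : Fin s → ℕ) (hp : ∀ i, 2 ≤ p i)
    (μs : Measure (Fin s → ℝ))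
    (hμs : μs = Measure.pi (fun _ : Fin s =>
      (volume.restrict (Set.Icc (-1 : ℝ) 1)).withDensity
        (fun x => ENNReal.ofReal (1 / (Real.pi * Real.sqrt (1 - x ^ 2))))))
    (B : (Fin s → ℝ) → ℝ)
    (hB : ∀ x, B x = ac + ∑ m ∈ range (L + 1),
        a m * ∏ i : Fin s, (T ℝ ((p i) ^ m : ℕ)).eval (x i))
    (σ : ℕ → ℝ)
    (hσ : ∀ N : ℕ, σ N =
      (1 / (N : ℝ)) * ((∫ x, B x ^ 2 ∂μs) - (∫ x, B x ∂μs) ^ 2)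
      + (2 / (N : ℝ) ^ 2) * ∑ l ∈ Icc 1 N, ((N : ℝ) - (l : ℝ)) *
          ((∫ x, B x * B (fun i => (fun y => (T ℝ (p i)).eval y)^[l] (x i)) ∂μs)
            - (∫ x, B x ∂μs) ^ 2)) :
    (∀ N : ℕ, L ≤ N → 1 ≤ N →
      σ N = (1 / ((2 : ℝ) ^ s * N)) * (∑ m ∈ range (L + 1), a m) ^ 2
        - (1 / ((2 : ℝ) ^ (s - 1) * (N : ℝ) ^ 2)) *
            ∑ l ∈ Icc 1 L, ∑ m ∈ Icc l L, (l : ℝ) * a m * a (m - l))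
    ∧ (∑ m ∈ range (L + 1), a m = 0 →
        (fun N : ℕ => σ N) =O[Filter.atTop] (fun N : ℕ => 1 / (N : ℝ) ^ 2)) := by
  have hμs' : μs = piM s := by rw [hμs, piM, chnu_def]
  -- compositions
  have hBl : ∀ (l : ℕ) (x : Fin s → ℝ),
      B (fun i => (fun y => (T ℝ (p i)).eval y)^[l] (x i))
        = ac + ∑ m ∈ range (L + 1), a m * ∏ i, (T ℝ ((p i ^ (m + l) : ℕ) : ℤ)).eval (x i) := by
    intro l x
    rw [hB]
    congr 1
    refine Finset.sum_congr rfl fun m _ => ?_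
    congr 1
    refine Finset.prod_congr rfl fun i _ => ?_
    rw [iterT (p i) l (x i), ← eval_comp, ← T_mul]
    congr 2
    push_cast [pow_add]
    ring
  -- the three integrals
  have hI1 : ∫ x, B x ∂μs = ac := by
    rw [hμs']
    simp only [hB]
    exact mean_int s L hs ac a p hp
  have hDl : ∀ l : ℕ, ∫ x, B x * B (fun i => (fun y => (T ℝ (p i)).eval y)^[l] (x i)) ∂μs
      = ac ^ 2 + ((2:ℝ) ^ s)⁻¹ * ∑ m ∈ Finset.Icc l L, a m * a (m - l) := by
    intro l
    rw [hμs']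
    simp only [hBl l, hB]
    exact key_int s L hs ac a p hp l
  have hI2 : ∫ x, B x ^ 2 ∂μs
      = ac ^ 2 + ((2:ℝ) ^ s)⁻¹ * ∑ m ∈ range (L + 1), a m ^ 2 := by
    have hsq : ∀ x : Fin s → ℝ,
        B x ^ 2 = B x * B (fun i => (fun y => (T ℝ (p i)).eval y)^[0] (x i)) := by
      intro x
      rw [show (fun i => (fun y => (T ℝ (p i)).eval y)^[0] (x i)) = x from rfl]
      ring
    simp only [hsq]
    rw [hDl 0]
    congr 2
    rw [show Finset.Icc 0 L = range (L + 1) from by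
      ext x; simp only [Finset.mem_Icc, Finset.mem_range]; omega]
    exact Finset.sum_congr rfl fun m _ => by rw [Nat.sub_zero, sq]
  -- notation
  set S1 : ℝ := ∑ m ∈ range (L + 1), a m with hS1
  set S2 : ℝ := ∑ m ∈ range (L + 1), a m ^ 2 with hS2
  set D : ℕ → ℝ := fun l => ∑ m ∈ Finset.Icc l L, a m * a (m - l) with hD
  set X : ℝ := ∑ l ∈ Finset.Icc 1 L, D l with hX
  set Y : ℝ := ∑ l ∈ Finset.Icc 1 L, (l : ℝ) * D l with hY
  have hDzero : ∀ l : ℕ, L < l → D l = 0 := by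
    intro l hl
    simp only [hD]
    rw [Finset.Icc_eq_empty (by omega), Finset.sum_empty]
  have hYW : ∑ l ∈ Finset.Icc 1 L, ∑ m ∈ Finset.Icc l L, (l : ℝ) * a m * a (m - l) = Y := by
    rw [hY]
    refine Finset.sum_congr rfl fun l _ => ?_
    rw [Finset.mul_sum]
    exact Finset.sum_congr rfl fun m _ => by ring
  have hsq1 : S1 ^ 2 = S2 + 2 * X := sq_expand a L
  obtain ⟨t, rfl⟩ : ∃ t, s = t + 1 := ⟨s - 1, by omega⟩
  have h2t : ((2:ℝ) ^ (t + 1 - 1)) = 2 ^ t := by norm_num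
  -- part 1
  have part1 : ∀ N : ℕ, L ≤ N → 1 ≤ N →
      σ N = (1 / ((2 : ℝ) ^ (t + 1) * N)) * S1 ^ 2
        - (1 / ((2 : ℝ) ^ (t + 1 - 1) * (N : ℝ) ^ 2)) *
            ∑ l ∈ Finset.Icc 1 L, ∑ m ∈ Finset.Icc l L, (l : ℝ) * a m * a (m - l) := by
    intro N hLN hN1
    rw [hσ N, hI1, hI2]
    have hterm : ∀ l ∈ Finset.Icc 1 N,
        ((N : ℝ) - (l : ℝ)) *
          ((∫ x, B x * B (fun i => (fun y => (T ℝ (p i)).eval y)^[l] (x i)) ∂μs) - ac ^ 2)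
        = ((N : ℝ) - (l : ℝ)) * (((2:ℝ) ^ (t + 1))⁻¹ * D l) := by
      intro l _
      rw [hDl l]
      ring
    rw [Finset.sum_congr rfl hterm]
    have htrunc : ∑ l ∈ Finset.Icc 1 N, ((N : ℝ) - (l : ℝ)) * (((2:ℝ) ^ (t + 1))⁻¹ * D l)
        = ∑ l ∈ Finset.Icc 1 L, ((N : ℝ) - (l : ℝ)) * (((2:ℝ) ^ (t + 1))⁻¹ * D l) := by
      refine (Finset.sum_subset (Finset.Icc_subset_Icc_right hLN) fun x hx hnx => ?_).symm
      rw [Finset.mem_Icc] at hx hnx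
      rw [hDzero x (by omega), mul_zero, mul_zero]
    rw [htrunc]
    have hsum1 : ∑ l ∈ Finset.Icc 1 L, ((N : ℝ) - (l : ℝ)) * (((2:ℝ) ^ (t + 1))⁻¹ * D l)
        = ((2:ℝ) ^ (t + 1))⁻¹ * ((N : ℝ) * X - Y) := by
      calc ∑ l ∈ Finset.Icc 1 L, ((N : ℝ) - (l : ℝ)) * (((2:ℝ) ^ (t + 1))⁻¹ * D l)
          = ∑ l ∈ Finset.Icc 1 L, (((2:ℝ) ^ (t + 1))⁻¹ * ((N : ℝ) * D l)
              - ((2:ℝ) ^ (t + 1))⁻¹ * ((l : ℝ) * D l)) :=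
            Finset.sum_congr rfl fun l _ => by ring
        _ = ((2:ℝ) ^ (t + 1))⁻¹ * ((N : ℝ) * X - Y) := by
            rw [Finset.sum_sub_distrib, ← Finset.mul_sum, ← Finset.mul_sum, ← Finset.mul_sum,
              ← hX, ← hY]
            ring
    rw [hsum1, hYW, hsq1, h2t]
    have hN0 : (N : ℝ) ≠ 0 := Nat.cast_ne_zero.mpr (by omega)
    have h2t0 : ((2:ℝ) ^ t) ≠ 0 := by positivity
    have h2t10 : ((2:ℝ) ^ (t + 1)) ≠ 0 := by positivity
    field_simp
    ring
  refine ⟨part1, ?_⟩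
  intro h0
  have heq : (fun N : ℕ => σ N)
      =ᶠ[Filter.atTop] fun N : ℕ => (-(Y / 2 ^ t)) * (1 / (N : ℝ) ^ 2) := by
    filter_upwards [Filter.eventually_ge_atTop (max L 1)] with N hN
    have h1 : L ≤ N := le_trans (le_max_left _ _) hN
    have h2 : 1 ≤ N := le_trans (le_max_right _ _) hN
    rw [part1 N h1 h2, hYW, h0, h2t]
    ring
  exact heq.trans_isBigO
    ((isBigO_refl (fun N : ℕ => 1 / (N : ℝ) ^ 2) Filter.atTop).const_mul_left _)
end
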